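/- arXiv:1509.01128 — 3 statements merged into one kernel-verified Lean document; each statement's English description precedes it below -/
import Mathlib

section
/- Let 0 ≤ s ≤ t ≤ d, δ > 0, and let P₀ ⊆ B(0,1) ⊆ ℝ^d be a δ-separated set with |P₀| ≥ c δ^{−t} and |P₀ ∩ B(x,r)| ≤ C (r/δ)^t for all x ∈ ℝ^d and r ≥ δ, where 0 < c < C < ∞. Then there exists a subset P ⊆ P₀ with |P| ≥ κ_d (c/C) δ^{−s} satisfying |P ∩ B(x,r)| ≤ K_d (r/δ)^s for all x ∈ ℝ^d and r ≥ δ, where κ_d > 0 and K_d < ∞ are constants depending only on d. -/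
open Metric Set

/-- A set is `δ`-separated if distinct points are at distance at least `δ`. -/
def IsSeparated' {X : Type*} [PseudoMetricSpace X] (δ : ℝ) (P : Set X) : Prop :=
  ∀ p ∈ P, ∀ q ∈ P, p ≠ q → δ ≤ dist p q

private lemma int_floor_div (a : ℝ) (n : ℕ) (hn : 0 < n) : ⌊a / n⌋ = ⌊a⌋ / (n : ℤ) := by
  have hn' : (0:ℝ) < n := by exact_mod_cast hn
  set q : ℤ := ⌊a⌋ / (n : ℤ) with hq
  have h1 : q * n ≤ ⌊a⌋ := Int.ediv_mul_le ⌊a⌋ (by exact_mod_cast hn.ne')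
  have h2 : ⌊a⌋ < (q + 1) * n := by
    have := Int.lt_ediv_add_one_mul_self ⌊a⌋ (by exact_mod_cast hn : (0:ℤ) < n)
    simpa [hq] using this
  rw [Int.floor_eq_iff]
  constructor
  · have h3 : ((q * n : ℤ) : ℝ) ≤ a := le_trans (by exact_mod_cast h1) (Int.floor_le a)
    rw [le_div_iff₀ hn']
    push_cast at h3 ⊢; linarith
  · have h3 : a < ((q+1) * n : ℤ) := by
      calc a < ⌊a⌋ + 1 := Int.lt_floor_add_one a
      _ ≤ ((q+1) * n : ℤ) := by exact_mod_cast h2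
    rw [div_lt_iff₀ hn']
    push_cast at h3 ⊢; linarith
private lemma coord_abs_le_dist {d : ℕ} (y x : EuclideanSpace ℝ (Fin d)) (i : Fin d) :
    |y i - x i| ≤ dist y x := by
  rw [EuclideanSpace.dist_eq, ← Real.sqrt_sq_eq_abs]
  apply Real.sqrt_le_sqrt
  have := Finset.single_le_sum (f := fun i => dist (y i) (x i) ^ 2)
    (fun i _ => sq_nonneg _) (Finset.mem_univ i)
  simpa [Real.dist_eq] using this
private lemma floor_nest {j j' : ℕ} (hjj : j ≤ j') {a b : ℝ}
    (h : ⌊(2:ℝ)^j' * a⌋ = ⌊(2:ℝ)^j' * b⌋) : ⌊(2:ℝ)^j * a⌋ = ⌊(2:ℝ)^j * b⌋ := by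
  have key : ∀ x : ℝ, ⌊(2:ℝ)^j * x⌋ = ⌊(2:ℝ)^j' * x⌋ / ((2^(j'-j) : ℕ) : ℤ) := by
    intro x
    rw [← int_floor_div _ _ (by positivity : (0:ℕ) < 2^(j'-j))]
    congr 1
    push_cast
    rw [eq_div_iff (by positivity)]
    rw [show (2:ℝ)^j' = 2^j * 2^(j'-j) by rw [← pow_add]; congr 1; omega]
    ring
  rw [key a, key b, h]
private lemma dist_le_of_floor_eq {d : ℕ} {j : ℕ} {y z : EuclideanSpace ℝ (Fin d)}
    (h : ∀ i, ⌊(2:ℝ)^j * y i⌋ = ⌊(2:ℝ)^j * z i⌋) :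
    dist y z ≤ Real.sqrt d * (1/2)^j := by
  rw [EuclideanSpace.dist_eq]
  have hcoord : ∀ i, dist (y i) (z i) ^ 2 ≤ ((1/2:ℝ)^j)^2 := by
    intro i
    have h1 : |(2:ℝ)^j * y i - (2:ℝ)^j * z i| < 1 :=
      Int.abs_sub_lt_one_of_floor_eq_floor (h i)
    have h2 : |y i - z i| ≤ (1/2:ℝ)^j := by
      rw [← mul_sub, abs_mul, abs_of_pos (by positivity : (0:ℝ) < (2:ℝ)^j)] at h1
      have hp : (0:ℝ) < (2:ℝ)^j := by positivity
      rw [div_pow, one_pow, le_div_iff₀ hp]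
      nlinarith [abs_nonneg (y i - z i)]
    rw [Real.dist_eq]
    have := abs_nonneg (y i - z i)
    nlinarith
  calc Real.sqrt (∑ i, dist (y i) (z i) ^ 2) ≤ Real.sqrt (d * ((1/2:ℝ)^j)^2) := by
        apply Real.sqrt_le_sqrt
        calc (∑ i, dist (y i) (z i) ^ 2) ≤ ∑ _i : Fin d, ((1/2:ℝ)^j)^2 :=
              Finset.sum_le_sum (fun i _ => hcoord i)
          _ = d * ((1/2:ℝ)^j)^2 := by simp [Finset.sum_const]
    _ = Real.sqrt d * (1/2)^j := by
        rw [Real.sqrt_mul (by positivity), Real.sqrt_sq (by positivity)]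
/-- coordinate floor data of a point at scale `2^{-j}`. -/
private noncomputable def Dfl (d : ℕ) (j : ℕ) (y : EuclideanSpace ℝ (Fin d)) : Fin d → ℤ :=
  fun i => ⌊(2:ℝ)^j * y i⌋

set_option maxHeartbeats 2000000 in
private lemma main_case (d : ℕ) (s t δ c C : ℝ) (P₀ : Set (EuclideanSpace ℝ (Fin d)))
    (hs : 0 ≤ s) (hst : s ≤ t) (htd : t ≤ d) (hδ : 0 < δ) (hc : 0 < c) (hcC : c < C)
    (hsub : P₀ ⊆ Metric.ball 0 1) (hfin : P₀.Finite)
    (hcard : c * δ ^ (-t) ≤ P₀.ncard)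
    (hreg : ∀ (x : EuclideanSpace ℝ (Fin d)) (r : ℝ), δ ≤ r →
      ((P₀ ∩ Metric.ball x r).ncard : ℝ) ≤ C * (r / δ) ^ t)
    (hδ1 : δ ≤ 1) :
    ∃ P ⊆ P₀, ((1:ℝ) + (2 + Real.sqrt d)^d)⁻¹ * (c / C) * δ ^ (-s) ≤ P.ncard ∧
      ∀ (x : EuclideanSpace ℝ (Fin d)) (r : ℝ), δ ≤ r →
        ((P ∩ Metric.ball x r).ncard : ℝ) ≤ (2*12^d + 2^(2*d+1)) * (r / δ) ^ s := by
  classical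
  have hE : True := trivial
  set Λ : ℝ := (2 + Real.sqrt d)^d with hΛdef
  have hsqd : (0:ℝ) ≤ Real.sqrt d := Real.sqrt_nonneg _
  have hΛ1 : (1:ℝ) ≤ Λ := one_le_pow₀ (by linarith)
  have hC0 : (0:ℝ) < C := lt_trans hc hcC
  -- the scale index m : (1/2)^m ≤ δ ≤ 2*(1/2)^m
  obtain ⟨m, hm1, hm2⟩ : ∃ m : ℕ, (1/2:ℝ)^m ≤ δ ∧ δ ≤ 2*(1/2:ℝ)^m := by
    obtain ⟨n, hn⟩ := exists_pow_lt_of_lt_one hδ (by norm_num : (1/2:ℝ) < 1)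
    have hex : ∃ n : ℕ, (1/2:ℝ)^n ≤ δ := ⟨n, hn.le⟩
    refine ⟨Nat.find hex, Nat.find_spec hex, ?_⟩
    rcases Nat.eq_zero_or_pos (Nat.find hex) with h0 | h0
    · rw [h0]; norm_num; linarith
    · have hlt := Nat.find_min hex (m := Nat.find hex - 1) (by omega)
      push_neg at hlt
      have h2 : (1/2:ℝ)^((Nat.find hex - 1)+1) = (1/2:ℝ)^(Nat.find hex - 1) * (1/2) :=
        pow_succ _ _
      rw [show Nat.find hex - 1 + 1 = Nat.find hex by omega] at h2
      linarith
  set F₀ : Finset (EuclideanSpace ℝ (Fin d)) := hfin.toFinset with hF₀def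
  set cap : ℕ → ℝ := fun j => (2:ℝ) ^ (s * ((m - j : ℕ) : ℝ)) with hcapdef
  have hcap_pos : ∀ j, 0 < cap j := fun j => Real.rpow_pos_of_pos (by norm_num) _
  have hcap1 : ∀ j, 1 ≤ cap j := by
    intro j
    have : (0:ℝ) ≤ s * ((m - j : ℕ) : ℝ) := mul_nonneg hs (Nat.cast_nonneg _)
    calc (1:ℝ) = (2:ℝ) ^ (0:ℝ) := by rw [Real.rpow_zero]
      _ ≤ _ := Real.rpow_le_rpow_of_exponent_le (by norm_num) this
  set Good : Finset (EuclideanSpace ℝ (Fin d)) → Prop :=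
    fun S => ∀ j ≤ m, ∀ k : Fin d → ℤ,
      ((S.filter (fun y => Dfl d j y = k)).card : ℝ) ≤ 2 * cap j with hGooddef
  -- pick a maximal good subset
  obtain ⟨Pf, hPfmem, hPfmax⟩ := Finset.exists_max_image
    ((F₀.powerset).filter (fun S => Good S)) Finset.card
    ⟨∅, Finset.mem_filter.mpr ⟨Finset.empty_mem_powerset _, by
      rw [hGooddef]; intro j hj k; rw [Finset.filter_empty]; simp; positivity⟩⟩
  have hPfsub : Pf ⊆ F₀ := by
    have := Finset.mem_filter.mp hPfmem
    exact Finset.mem_powerset.mp this.1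
  have hPfGood : Good Pf := (Finset.mem_filter.mp hPfmem).2
  have hPfGood' : ∀ j ≤ m, ∀ k : Fin d → ℤ,
      ((Pf.filter (fun y => Dfl d j y = k)).card : ℝ) ≤ 2 * cap j := by
    have h := hPfGood
    rw [hGooddef] at h
    exact h
  have hcube : ∀ j, j ≤ m → ∀ p : EuclideanSpace ℝ (Fin d),
      ((F₀.filter (fun y => Dfl d j y = Dfl d j p)).card : ℝ) ≤ (C * Λ * δ^(s-t)) * cap j := by
    intro j hjm0 p
    have hjm : j ≤ m := hjm0
    have ht0 : 0 ≤ t := le_trans hs hst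
    -- geometry : the cube is inside a ball of radius rr around p
    set rr : ℝ := δ + Real.sqrt d * (1/2)^j with hrrdef
    have hrrδ : δ ≤ rr := le_add_of_nonneg_right (by positivity)
    have hAset : ((F₀.filter (fun y => Dfl d j y = Dfl d j p)) : Set (EuclideanSpace ℝ (Fin d)))
        ⊆ P₀ ∩ Metric.ball p rr := by
      intro y hy
      simp only [Finset.coe_filter, Set.mem_setOf_eq] at hy
      obtain ⟨hyF, hyD⟩ := hy
      constructor
      · rw [hF₀def, Set.Finite.mem_toFinset] at hyF
        exact hyF
      · rw [Metric.mem_ball]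
        have hd := dist_le_of_floor_eq (d := d) (j := j) (y := y) (z := p)
          (fun i => congrFun hyD i)
        calc dist y p ≤ Real.sqrt d * (1/2)^j := hd
          _ < rr := by rw [hrrdef]; linarith
    have hA : ((F₀.filter (fun y => Dfl d j y = Dfl d j p)).card : ℝ) ≤ C * (rr/δ)^t := by
      calc ((F₀.filter (fun y => Dfl d j y = Dfl d j p)).card : ℝ)
          = (((F₀.filter (fun y => Dfl d j y = Dfl d j p)) :
              Set (EuclideanSpace ℝ (Fin d))).ncard : ℝ) := by
            rw [Set.ncard_coe_finset]
        _ ≤ (((P₀ ∩ Metric.ball p rr) : Set (EuclideanSpace ℝ (Fin d))).ncard : ℝ) := by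
            have := Set.ncard_le_ncard hAset (hfin.subset Set.inter_subset_left)
            exact_mod_cast this
        _ ≤ C * (rr/δ)^t := hreg p rr hrrδ
    -- compare rr with the cube scale
    have hhalfj : (0:ℝ) < (1/2:ℝ)^j := by positivity
    have hmle : (1/2:ℝ)^m ≤ (1/2:ℝ)^j := pow_le_pow_of_le_one (by norm_num) (by norm_num) hjm
    have hδ2j : δ ≤ 2*(1/2:ℝ)^j := by linarith
    have hrru : rr ≤ (2 + Real.sqrt d) * (1/2:ℝ)^j := by
      rw [hrrdef]
      nlinarith
    have hbase : (0:ℝ) < (1/2:ℝ)^j/δ := by positivity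
    have hB : (rr/δ)^t ≤ Λ * ((1/2:ℝ)^j/δ)^t := by
      calc (rr/δ)^t ≤ ((2 + Real.sqrt d) * ((1/2:ℝ)^j/δ))^t := by
            apply Real.rpow_le_rpow (by positivity) _ ht0
            calc rr/δ ≤ ((2 + Real.sqrt d) * (1/2:ℝ)^j)/δ := by gcongr
              _ = (2 + Real.sqrt d) * ((1/2:ℝ)^j/δ) := mul_div_assoc _ _ _
        _ = (2 + Real.sqrt d)^t * ((1/2:ℝ)^j/δ)^t := by
            rw [Real.mul_rpow (by positivity) (le_of_lt hbase)]
        _ ≤ Λ * ((1/2:ℝ)^j/δ)^t := by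
            apply mul_le_mul_of_nonneg_right _ (Real.rpow_nonneg (le_of_lt hbase) t)
            calc (2 + Real.sqrt d)^t ≤ (2 + Real.sqrt d)^(d:ℝ) :=
                  Real.rpow_le_rpow_of_exponent_le (by linarith) htd
              _ = Λ := by rw [hΛdef, Real.rpow_natCast]
    -- split exponents
    have hC' : ((1/2:ℝ)^j/δ)^t ≤ δ^(s-t) * ((1/2:ℝ)^j/δ)^s := by
      have hsplit2 : ((1/2:ℝ)^j/δ)^t = ((1/2:ℝ)^j/δ)^s * ((1/2:ℝ)^j/δ)^(t-s) := by
        rw [← Real.rpow_add hbase]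
        ring_nf
      rw [hsplit2, mul_comm (δ^(s-t))]
      apply mul_le_mul_of_nonneg_left _ (Real.rpow_nonneg (le_of_lt hbase) s)
      calc ((1/2:ℝ)^j/δ)^(t-s) ≤ (δ⁻¹)^(t-s) := by
            apply Real.rpow_le_rpow (le_of_lt hbase) _ (by linarith)
            rw [div_eq_mul_inv]
            have h1' : (1/2:ℝ)^j ≤ 1 := pow_le_one₀ (by norm_num) (by norm_num)
            nlinarith [inv_pos.mpr hδ]
        _ = δ^(s-t) := by
            rw [Real.inv_rpow hδ.le, ← Real.rpow_neg hδ.le]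
            congr 1
            ring
    -- cube scale bound by the saturated count
    have hD : ((1/2:ℝ)^j/δ)^s ≤ cap j := by
      have hpow : (2:ℝ)^(m-j:ℕ) * (2:ℝ)^j = 2^m := by
        rw [← pow_add]
        congr 1
        omega
      have hb2 : (1/2:ℝ)^j/δ ≤ (2:ℝ)^(m-j:ℕ) := by
        rw [div_le_iff₀ hδ]
        have hkey : (1/2:ℝ)^j = (2:ℝ)^(m-j:ℕ) * (1/2:ℝ)^m := by
          have hsp : (1/2:ℝ)^m = (1/2:ℝ)^(m-j) * (1/2:ℝ)^j := by
            rw [← pow_add]; congr 1; omega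
          rw [hsp, ← mul_assoc, ← mul_pow]
          norm_num
        rw [hkey]
        have hnn : (0:ℝ) ≤ (2:ℝ)^(m-j:ℕ) := by positivity
        exact mul_le_mul_of_nonneg_left hm1 hnn
      calc ((1/2:ℝ)^j/δ)^s ≤ ((2:ℝ)^(m-j:ℕ))^s :=
            Real.rpow_le_rpow (le_of_lt hbase) hb2 hs
        _ = cap j := by
          rw [hcapdef, ← Real.rpow_natCast 2 (m-j), ← Real.rpow_mul (by norm_num), mul_comm]
    -- put everything together
    have hX0 : (0:ℝ) ≤ ((1/2:ℝ)^j/δ)^s := Real.rpow_nonneg (le_of_lt hbase) s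
    have hδst0' : (0:ℝ) < δ^(s-t) := Real.rpow_pos_of_pos hδ _
    calc ((F₀.filter (fun y => Dfl d j y = Dfl d j p)).card : ℝ)
        ≤ C * (rr/δ)^t := hA
      _ ≤ C * (Λ * ((1/2:ℝ)^j/δ)^t) := mul_le_mul_of_nonneg_left hB hC0.le
      _ ≤ C * (Λ * (δ^(s-t) * ((1/2:ℝ)^j/δ)^s)) := by
          apply mul_le_mul_of_nonneg_left _ hC0.le
          exact mul_le_mul_of_nonneg_left hC' (by linarith)
      _ ≤ C * (Λ * (δ^(s-t) * cap j)) := by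
          apply mul_le_mul_of_nonneg_left _ hC0.le
          apply mul_le_mul_of_nonneg_left _ (by linarith)
          exact mul_le_mul_of_nonneg_left hD hδst0'.le
      _ = (C * Λ * δ^(s-t)) * cap j := by
          ring
  -- upper bound : ball counts for the good set Pf
  have hfloor3 : ∀ a b : ℝ, |a - b| < 1 →
      ⌊a⌋ = ⌊b⌋ - 1 ∨ ⌊a⌋ = ⌊b⌋ ∨ ⌊a⌋ = ⌊b⌋ + 1 := by
    intro a b hab
    rw [abs_sub_lt_iff] at hab
    have h1' : ⌊a⌋ ≤ ⌊b⌋ + 1 := by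
      have h' : a ≤ b + 1 := by linarith
      calc ⌊a⌋ ≤ ⌊b + 1⌋ := Int.floor_le_floor h'
        _ = ⌊b⌋ + 1 := by exact_mod_cast Int.floor_add_intCast b 1
    have h2' : ⌊b⌋ - 1 ≤ ⌊a⌋ := by
      calc ⌊b⌋ - 1 = ⌊b - (1:ℤ)⌋ := (Int.floor_sub_intCast b 1).symm
        _ ≤ ⌊a⌋ := Int.floor_le_floor (by push_cast; linarith)
    omega
  have hcover : ∀ (j : ℕ), j ≤ m → ∀ (z : EuclideanSpace ℝ (Fin d)) (u : ℝ), u ≤ (1/2:ℝ)^j →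
      ((Pf.filter (fun y => y ∈ Metric.ball z u)).card : ℝ) ≤ 3^d * (2 * cap j) := by
    intro j hjm z u hu
    set Kx : Finset (Fin d → ℤ) :=
      Fintype.piFinset (fun i => ({Dfl d j z i - 1, Dfl d j z i, Dfl d j z i + 1} : Finset ℤ))
      with hKx
    have hsub2 : Pf.filter (fun y => y ∈ Metric.ball z u) ⊆
        Kx.biUnion (fun k => Pf.filter (fun y => Dfl d j y = k)) := by
      intro y hy
      obtain ⟨hyPf, hyb⟩ := Finset.mem_filter.mp hy
      refine Finset.mem_biUnion.mpr ⟨Dfl d j y, ?_, Finset.mem_filter.mpr ⟨hyPf, rfl⟩⟩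
      rw [hKx, Fintype.mem_piFinset]
      intro i
      have hyz : |y i - z i| ≤ dist y z := coord_abs_le_dist y z i
      have hdist : dist y z < (1/2:ℝ)^j := lt_of_lt_of_le (Metric.mem_ball.mp hyb) hu
      have h2j : (0:ℝ) < (2:ℝ)^j := by positivity
      have habs : |(2:ℝ)^j * y i - (2:ℝ)^j * z i| < 1 := by
        rw [← mul_sub, abs_mul, abs_of_pos h2j]
        have hj2' : (2:ℝ)^j * (1/2:ℝ)^j = 1 := by
          rw [one_div, inv_pow, mul_inv_cancel₀ (by positivity)]
        calc (2:ℝ)^j * |y i - z i| < (2:ℝ)^j * (1/2:ℝ)^j := by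
              apply mul_lt_mul_of_pos_left _ h2j
              exact lt_of_le_of_lt hyz hdist
          _ = 1 := hj2'
      have h3' := hfloor3 _ _ habs
      simp only [Finset.mem_insert, Finset.mem_singleton]
      rcases h3' with h | h | h
      · left; exact h
      · right; left; exact h
      · right; right; exact h
    have hKxcard : (Kx.card : ℝ) ≤ 3^d := by
      have hn : Kx.card ≤ 3^d := by
        rw [hKx, Fintype.card_piFinset]
        calc ∏ i, ({Dfl d j z i - 1, Dfl d j z i, Dfl d j z i + 1} : Finset ℤ).card
            ≤ ∏ _i : Fin d, 3 := by
              apply Finset.prod_le_prod (fun _ _ => Nat.zero_le _)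
              intro i _
              apply le_trans (Finset.card_insert_le _ _)
              apply Nat.succ_le_succ
              apply le_trans (Finset.card_insert_le _ _)
              simp
          _ = 3^d := by simp
      exact_mod_cast hn
    calc ((Pf.filter (fun y => y ∈ Metric.ball z u)).card : ℝ)
        ≤ ((Kx.biUnion (fun k => Pf.filter (fun y => Dfl d j y = k))).card : ℝ) := by
          exact_mod_cast Finset.card_le_card hsub2
      _ ≤ ∑ k ∈ Kx, ((Pf.filter (fun y => Dfl d j y = k)).card : ℝ) := by
          exact_mod_cast Finset.card_biUnion_le
      _ ≤ ∑ _k ∈ Kx, 2 * cap j := Finset.sum_le_sum (fun k _ => hPfGood' j hjm k)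
      _ = (Kx.card : ℝ) * (2 * cap j) := by rw [Finset.sum_const, nsmul_eq_mul]
      _ ≤ 3^d * (2 * cap j) := by
          apply mul_le_mul_of_nonneg_right hKxcard
          have := hcap_pos j
          linarith
  have hcapform : ∀ j : ℕ, cap j = ((2:ℝ)^(m-j:ℕ))^s := by
    intro j
    rw [hcapdef, ← Real.rpow_natCast 2 (m-j), ← Real.rpow_mul (by norm_num), mul_comm]
  have h2m : (2:ℝ)^m ≤ 2/δ := by
    have h1' : (1/2:ℝ)^m * (2:ℝ)^m = 1 := by
      rw [one_div, inv_pow, inv_mul_cancel₀ (by positivity)]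
    rw [le_div_iff₀ hδ]
    nlinarith [pow_pos (show (0:ℝ) < 2 by norm_num) m]
  have hupper : ∀ (x : EuclideanSpace ℝ (Fin d)) (r : ℝ), δ ≤ r →
      (((Pf : Set (EuclideanSpace ℝ (Fin d))) ∩ Metric.ball x r).ncard : ℝ) ≤ (2*12^d + 2^(2*d+1)) * (r / δ) ^ s := by
    intro x r hr
    have hr0 : 0 < r := lt_of_lt_of_le hδ hr
    have hrδpos : (0:ℝ) < r/δ := div_pos hr0 hδ
    have hXpos : (0:ℝ) < (r/δ)^s := Real.rpow_pos_of_pos hrδpos s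
    have hset : ((Pf : Set (EuclideanSpace ℝ (Fin d))) ∩ Metric.ball x r) =
        ((Pf.filter (fun y => y ∈ Metric.ball x r) : Finset (EuclideanSpace ℝ (Fin d))) :
          Set (EuclideanSpace ℝ (Fin d))) := by
      ext y
      simp [Finset.coe_filter]
    rw [hset, Set.ncard_coe_finset]
    rcases lt_or_ge r 1 with hr1 | hr1
    · -- small radius : compare with the best dyadic scale
      set j := Nat.findGreatest (fun n => r ≤ (1/2:ℝ)^n) m with hjdef
      have hj1 : r ≤ (1/2:ℝ)^j :=
        Nat.findGreatest_spec (P := fun n => r ≤ (1/2:ℝ)^n) (Nat.zero_le m) (by simpa using hr1.le)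
      have hjm : j ≤ m := Nat.findGreatest_le m
      have hj2 : (1/2:ℝ)^j ≤ 2*r := by
        rcases lt_or_eq_of_le hjm with hlt | heq
        · have hng : ¬ (r ≤ (1/2:ℝ)^(j+1)) :=
            Nat.findGreatest_is_greatest (Nat.lt_succ_self j) (by omega)
          push_neg at hng
          have hps : (1/2:ℝ)^(j+1) = (1/2:ℝ)^j * (1/2) := pow_succ _ _
          linarith
        · rw [heq]
          linarith
      have hcnt := hcover j hjm x r hj1
      have hcap4 : cap j ≤ 4^d * (r/δ)^s := by
        have hpow : (2:ℝ)^(m-j:ℕ) * (2:ℝ)^j = 2^m := by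
          rw [← pow_add]
          congr 1
          omega
        have hb : (2:ℝ)^(m-j:ℕ) ≤ 4*r/δ := by
          have hkey : (2:ℝ)^(m-j:ℕ) = (2:ℝ)^m * (1/2:ℝ)^j := by
            rw [← hpow, mul_assoc, ← mul_pow]
            norm_num
          rw [hkey]
          have hmm := mul_le_mul h2m hj2 (by positivity) (by positivity : (0:ℝ) ≤ 2/δ)
          calc (2:ℝ)^m * (1/2)^j ≤ (2/δ) * (2*r) := hmm
            _ = 4*r/δ := by ring
        calc cap j = ((2:ℝ)^(m-j:ℕ))^s := hcapform j
          _ ≤ (4*r/δ)^s := Real.rpow_le_rpow (by positivity) hb hs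
          _ = (4:ℝ)^s * (r/δ)^s := by
              rw [show (4:ℝ)*r/δ = 4*(r/δ) by ring,
                Real.mul_rpow (by norm_num) (le_of_lt hrδpos)]
          _ ≤ 4^d * (r/δ)^s := by
              apply mul_le_mul_of_nonneg_right _ (le_of_lt hXpos)
              calc (4:ℝ)^s ≤ (4:ℝ)^(d:ℝ) :=
                    Real.rpow_le_rpow_of_exponent_le (by norm_num) (le_trans hst htd)
                _ = 4^d := Real.rpow_natCast 4 d
      calc ((Pf.filter (fun y => y ∈ Metric.ball x r)).card : ℝ)
          ≤ 3^d * (2 * cap j) := hcnt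
        _ ≤ 3^d * (2 * (4^d * (r/δ)^s)) := by
            apply mul_le_mul_of_nonneg_left _ (by positivity)
            linarith [hcap4]
        _ = 2 * 12^d * (r/δ)^s := by
            rw [show (12:ℝ) = 3*4 by norm_num, mul_pow]
            ring
        _ ≤ (2*12^d + 2^(2*d+1)) * (r/δ)^s := by
            apply mul_le_mul_of_nonneg_right _ (le_of_lt hXpos)
            have hpos2 : (0:ℝ) < 2^(2*d+1) := by positivity
            linarith
    · -- big radius : everything is inside the unit ball
      have hsub3 : Pf.filter (fun y => y ∈ Metric.ball x r) ⊆
          Pf.filter (fun y => y ∈ Metric.ball (0 : EuclideanSpace ℝ (Fin d)) 1) := by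
        intro y hy
        refine Finset.mem_filter.mpr ⟨(Finset.mem_filter.mp hy).1, ?_⟩
        have hyF : y ∈ F₀ := hPfsub (Finset.mem_filter.mp hy).1
        rw [hF₀def, Set.Finite.mem_toFinset] at hyF
        exact hsub hyF
      have hcnt := hcover 0 (Nat.zero_le m) 0 1 (by norm_num)
      have hcap0 : cap 0 ≤ 2^d * (r/δ)^s := by
        have hb : (2:ℝ)^(m-0:ℕ) ≤ 2*r/δ := by
          simp only [Nat.sub_zero]
          calc (2:ℝ)^m ≤ 2/δ := h2m
            _ ≤ 2*r/δ := by
              gcongr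
              linarith
        calc cap 0 = ((2:ℝ)^(m-0:ℕ))^s := hcapform 0
          _ ≤ (2*r/δ)^s := Real.rpow_le_rpow (by positivity) hb hs
          _ = (2:ℝ)^s * (r/δ)^s := by
              rw [show (2:ℝ)*r/δ = 2*(r/δ) by ring,
                Real.mul_rpow (by norm_num) (le_of_lt hrδpos)]
          _ ≤ 2^d * (r/δ)^s := by
              apply mul_le_mul_of_nonneg_right _ (le_of_lt hXpos)
              calc (2:ℝ)^s ≤ (2:ℝ)^(d:ℝ) :=
                    Real.rpow_le_rpow_of_exponent_le (by norm_num) (le_trans hst htd)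
                _ = 2^d := Real.rpow_natCast 2 d
      calc ((Pf.filter (fun y => y ∈ Metric.ball x r)).card : ℝ)
          ≤ ((Pf.filter (fun y => y ∈ Metric.ball (0 : EuclideanSpace ℝ (Fin d)) 1)).card : ℝ) := by
            exact_mod_cast Finset.card_le_card hsub3
        _ ≤ 3^d * (2 * cap 0) := hcnt
        _ ≤ 3^d * (2 * (2^d * (r/δ)^s)) := by
            apply mul_le_mul_of_nonneg_left _ (by positivity)
            linarith [hcap0]
        _ = 2 * 6^d * (r/δ)^s := by
            rw [show (6:ℝ) = 3*2 by norm_num, mul_pow]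
            ring
        _ ≤ (2*12^d + 2^(2*d+1)) * (r/δ)^s := by
            apply mul_le_mul_of_nonneg_right _ (le_of_lt hXpos)
            have hpos2 : (0:ℝ) < 2^(2*d+1) := by positivity
            have h612 : (6:ℝ)^d ≤ 12^d := pow_le_pow_left₀ (by norm_num) (by norm_num) d
            linarith
  -- saturation: rejected points witness a full cube
  set R : Finset (EuclideanSpace ℝ (Fin d)) := F₀ \ Pf with hRdef
  have hsat : ∀ p ∈ R, ∃ j, j ≤ m ∧
      cap j < ((Pf.filter (fun y => Dfl d j y = Dfl d j p)).card : ℝ) := by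
    intro p hp
    have hpF : p ∈ F₀ := (Finset.mem_sdiff.mp hp).1
    have hpP : p ∉ Pf := (Finset.mem_sdiff.mp hp).2
    have hnotgood : ¬ Good (insert p Pf) := by
      intro hgood
      have hmem' : insert p Pf ∈ (F₀.powerset).filter (fun S => Good S) :=
        Finset.mem_filter.mpr ⟨Finset.mem_powerset.mpr (Finset.insert_subset hpF hPfsub), hgood⟩
      have hle := hPfmax _ hmem'
      rw [Finset.card_insert_of_notMem hpP] at hle
      omega
    simp only [hGooddef] at hnotgood
    push_neg at hnotgood
    obtain ⟨j, hjm, k, hk⟩ := hnotgood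
    have hkp : Dfl d j p = k := by
      by_contra hne
      rw [Finset.filter_insert, if_neg hne] at hk
      exact absurd (hPfGood' j hjm k) (not_le.mpr hk)
    rw [Finset.filter_insert, if_pos hkp] at hk
    have hcard' : (((insert p (Pf.filter (fun y => Dfl d j y = k))).card : ℕ) : ℝ) ≤
        ((Pf.filter (fun y => Dfl d j y = k)).card : ℝ) + 1 := by
      exact_mod_cast Finset.card_insert_le _ _
    refine ⟨j, hjm, ?_⟩
    have h1c := hcap1 j
    rw [hkp]
    linarith
  set g : EuclideanSpace ℝ (Fin d) → ℕ := fun p => if hp : p ∈ R then Nat.find (hsat p hp) else 0 with hgdef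
  have hg1 : ∀ p, (hp : p ∈ R) → g p ≤ m ∧
      cap (g p) < ((Pf.filter (fun y => Dfl d (g p) y = Dfl d (g p) p)).card : ℝ) := by
    intro p hp
    simp only [hgdef, dif_pos hp]
    exact Nat.find_spec (hsat p hp)
  have hg2 : ∀ p, (hp : p ∈ R) → ∀ j', (j' ≤ m ∧
      cap j' < ((Pf.filter (fun y => Dfl d j' y = Dfl d j' p)).card : ℝ)) → g p ≤ j' := by
    intro p hp j' h
    simp only [hgdef, dif_pos hp]
    exact Nat.find_min' (hsat p hp) h
  set Φ : EuclideanSpace ℝ (Fin d) → ℕ × (Fin d → ℤ) := fun p => (g p, Dfl d (g p) p) with hΦdef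
  -- disjointness of the chosen saturated cubes
  have hdisj : ∀ p ∈ R, ∀ q ∈ R, ∀ y : EuclideanSpace ℝ (Fin d),
      Dfl d (g p) y = Dfl d (g p) p → Dfl d (g q) y = Dfl d (g q) q → Φ p = Φ q := by
    have haux : ∀ p ∈ R, ∀ q ∈ R, ∀ y : EuclideanSpace ℝ (Fin d), g p ≤ g q →
        Dfl d (g p) y = Dfl d (g p) p → Dfl d (g q) y = Dfl d (g q) q → g q ≤ g p := by
      intro p hp q hq y hle h1' h2'
      have hnest : Dfl d (g p) y = Dfl d (g p) q := by
        funext i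
        exact floor_nest hle (congrFun h2' i)
      have hDq : Dfl d (g p) q = Dfl d (g p) p := hnest.symm.trans h1'
      apply hg2 q hq (g p)
      refine ⟨(hg1 p hp).1, ?_⟩
      rw [hDq]
      exact (hg1 p hp).2
    intro p hp q hq y h1' h2'
    have heq : g p = g q := by
      rcases le_total (g p) (g q) with h | h
      · exact le_antisymm h (haux p hp q hq y h h1' h2')
      · exact le_antisymm (haux q hq p hp y h h2' h1') h
    have hsnd : Dfl d (g p) p = Dfl d (g q) q := by
      rw [← h1', heq, h2']
    simp only [hΦdef, Prod.mk.injEq]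
    exact ⟨heq, by rw [← heq, hsnd, heq]⟩
  set 𝒞 : Finset (ℕ × (Fin d → ℤ)) := R.image Φ with h𝒞def
  have h1 : (R.card : ℝ) ≤ ∑ cc ∈ 𝒞, ((F₀.filter (fun y => Dfl d cc.1 y = cc.2)).card : ℝ) := by
    have hsubR : R ⊆ 𝒞.biUnion (fun cc => F₀.filter (fun y => Dfl d cc.1 y = cc.2)) := by
      intro p hp
      refine Finset.mem_biUnion.mpr ⟨Φ p, Finset.mem_image_of_mem Φ hp, ?_⟩
      refine Finset.mem_filter.mpr ⟨(Finset.mem_sdiff.mp hp).1, rfl⟩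
    calc (R.card : ℝ)
        ≤ ((𝒞.biUnion (fun cc => F₀.filter (fun y => Dfl d cc.1 y = cc.2))).card : ℝ) := by
          exact_mod_cast Finset.card_le_card hsubR
      _ ≤ ∑ cc ∈ 𝒞, ((F₀.filter (fun y => Dfl d cc.1 y = cc.2)).card : ℝ) := by
          exact_mod_cast Finset.card_biUnion_le
  have h2 : ∀ cc ∈ 𝒞, ((F₀.filter (fun y => Dfl d cc.1 y = cc.2)).card : ℝ) ≤
      (C * Λ * δ^(s-t)) * ((Pf.filter (fun y => Dfl d cc.1 y = cc.2)).card : ℝ) := by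
    intro cc hcc
    obtain ⟨p, hp, hΦp⟩ := Finset.mem_image.mp hcc
    subst hΦp
    simp only [hΦdef]
    have hfac : (0:ℝ) ≤ C * Λ * δ^(s-t) := by positivity
    calc ((F₀.filter (fun y => Dfl d (g p) y = Dfl d (g p) p)).card : ℝ)
        ≤ (C * Λ * δ^(s-t)) * cap (g p) := hcube (g p) (hg1 p hp).1 p
      _ ≤ (C * Λ * δ^(s-t)) * ((Pf.filter (fun y => Dfl d (g p) y = Dfl d (g p) p)).card : ℝ) :=
          mul_le_mul_of_nonneg_left (le_of_lt (hg1 p hp).2) hfac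
  have h3 : ∑ cc ∈ 𝒞, ((Pf.filter (fun y => Dfl d cc.1 y = cc.2)).card : ℝ) ≤ (Pf.card : ℝ) := by
    have hdisj2 : ∀ c1 ∈ 𝒞, ∀ c2 ∈ 𝒞, c1 ≠ c2 →
        Disjoint (Pf.filter (fun y => Dfl d c1.1 y = c1.2))
          (Pf.filter (fun y => Dfl d c2.1 y = c2.2)) := by
      intro c1 hc1 c2 hc2 hne
      rw [Finset.disjoint_left]
      intro y hy1 hy2
      obtain ⟨p, hp, hΦp⟩ := Finset.mem_image.mp hc1
      obtain ⟨q, hq, hΦq⟩ := Finset.mem_image.mp hc2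
      apply hne
      rw [← hΦp, ← hΦq]
      apply hdisj p hp q hq y
      · have := (Finset.mem_filter.mp hy1).2
        rw [← hΦp] at this
        exact this
      · have := (Finset.mem_filter.mp hy2).2
        rw [← hΦq] at this
        exact this
    have hnat : ∑ cc ∈ 𝒞, (Pf.filter (fun y => Dfl d cc.1 y = cc.2)).card ≤ Pf.card := by
      rw [← Finset.card_biUnion hdisj2]
      apply Finset.card_le_card
      intro y hy
      obtain ⟨cc, _, hycc⟩ := Finset.mem_biUnion.mp hy
      exact (Finset.mem_filter.mp hycc).1
    exact_mod_cast hnat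
  -- conclude the cardinality bound
  have hδst0 : (0:ℝ) < δ^(s-t) := Real.rpow_pos_of_pos hδ _
  have hδst1 : (1:ℝ) ≤ δ^(s-t) :=
    Real.one_le_rpow_of_pos_of_le_one_of_nonpos hδ hδ1 (by linarith)
  have hC1 : (1:ℝ) ≤ C := by
    have hne : P₀.Nonempty := by
      rw [Set.nonempty_iff_ne_empty]
      intro h
      rw [h] at hcard
      simp at hcard
      have : (0:ℝ) < c * δ^(-t) := by positivity
      linarith
    obtain ⟨p₀, hp₀⟩ := hne
    have h1' : (1:ℝ) ≤ ((P₀ ∩ Metric.ball p₀ δ).ncard : ℝ) := by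
      have hmem : p₀ ∈ P₀ ∩ Metric.ball p₀ δ := ⟨hp₀, by simp [hδ]⟩
      have hn : 0 < (P₀ ∩ Metric.ball p₀ δ).ncard :=
        (Set.ncard_pos (hfin.subset Set.inter_subset_left)).mpr ⟨p₀, hmem⟩
      exact_mod_cast hn
    have h2' := hreg p₀ δ le_rfl
    rw [div_self hδ.ne', Real.one_rpow, mul_one] at h2'
    linarith
  have hcount : c * δ^(-t) ≤ (Pf.card : ℝ) * ((1+Λ) * (C * δ^(s-t))) := by
    have hsum : (F₀.card : ℝ) = (Pf.card : ℝ) + (R.card : ℝ) := by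
      have := Finset.card_sdiff_add_card_eq_card hPfsub
      rw [hRdef]
      push_cast [← this]
      ring
    have hF₀c : c * δ^(-t) ≤ (F₀.card : ℝ) := by
      rw [hF₀def]
      rwa [Set.ncard_eq_toFinset_card P₀ hfin] at hcard
    have hR : (R.card : ℝ) ≤ (C * Λ * δ^(s-t)) * (Pf.card : ℝ) := by
      calc (R.card : ℝ) ≤ ∑ cc ∈ 𝒞, ((F₀.filter (fun y => Dfl d cc.1 y = cc.2)).card : ℝ) := h1
        _ ≤ ∑ cc ∈ 𝒞, (C * Λ * δ^(s-t)) * ((Pf.filter (fun y => Dfl d cc.1 y = cc.2)).card : ℝ) :=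
            Finset.sum_le_sum h2
        _ = (C * Λ * δ^(s-t)) * ∑ cc ∈ 𝒞, ((Pf.filter (fun y => Dfl d cc.1 y = cc.2)).card : ℝ) := by
            rw [Finset.mul_sum]
        _ ≤ (C * Λ * δ^(s-t)) * (Pf.card : ℝ) := by
            apply mul_le_mul_of_nonneg_left h3
            positivity
    have hCδ : (1:ℝ) ≤ C * δ^(s-t) := by nlinarith
    have hN0 : (0:ℝ) ≤ (Pf.card : ℝ) := Nat.cast_nonneg _
    nlinarith [hF₀c, hsum, hR]
  refine ⟨(Pf : Set (EuclideanSpace ℝ (Fin d))), ?_, ?_, ?_⟩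
  · intro y hy
    have : y ∈ F₀ := hPfsub hy
    rwa [hF₀def, Set.Finite.mem_toFinset] at this
  · rw [Set.ncard_coe_finset]
    have hsplit : δ^(-t) = δ^(-s) * δ^(s-t) := by
      rw [← Real.rpow_add hδ]; ring_nf
    have ha : (0:ℝ) < δ^(-s) := Real.rpow_pos_of_pos hδ _
    have hΛ1C : (0:ℝ) < (1+Λ) * C := by positivity
    rw [show ((1:ℝ) + Λ)⁻¹ * (c / C) * δ ^ (-s) = (c * δ^(-s)) / ((1+Λ) * C) by
      field_simp]
    rw [div_le_iff₀ hΛ1C]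
    rw [hsplit] at hcount
    have := mul_le_mul_of_nonneg_right hcount (le_of_lt (inv_pos.mpr hδst0))
    calc c * δ^(-s) = (c * (δ^(-s) * δ^(s-t))) * (δ^(s-t))⁻¹ := by
          field_simp
      _ ≤ ((Pf.card : ℝ) * ((1+Λ) * (C * δ^(s-t)))) * (δ^(s-t))⁻¹ := this
      _ = (Pf.card : ℝ) * ((1+Λ) * C) := by
          field_simp
  · exact hupper

/-- For every `d` there are constants `κ_d > 0` and `K_d` such that:
if `0 ≤ s ≤ t ≤ d`, `δ > 0`, and `P₀ ⊆ B(0,1) ⊆ ℝ^d` is a δ-separated set with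
`|P₀| ≥ c δ^{−t}` and `|P₀ ∩ B(x,r)| ≤ C (r/δ)^t` for all `x` and `r ≥ δ`, where
`0 < c < C < ∞`, then there is `P ⊆ P₀` with `|P| ≥ κ_d (c/C) δ^{−s}` and
`|P ∩ B(x,r)| ≤ K_d (r/δ)^s` for all `x` and `r ≥ δ`. -/
theorem stmt_2 (d : ℕ) :
    ∃ κ K : ℝ, 0 < κ ∧ 0 < K ∧
      ∀ (s t δ c C : ℝ) (P₀ : Set (EuclideanSpace ℝ (Fin d))),
        0 ≤ s → s ≤ t → t ≤ d → 0 < δ → 0 < c → c < C →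
        P₀ ⊆ Metric.ball 0 1 → P₀.Finite → IsSeparated' δ P₀ →
        c * δ ^ (-t) ≤ P₀.ncard →
        (∀ (x : EuclideanSpace ℝ (Fin d)) (r : ℝ), δ ≤ r →
          ((P₀ ∩ Metric.ball x r).ncard : ℝ) ≤ C * (r / δ) ^ t) →
        ∃ P ⊆ P₀, κ * (c / C) * δ ^ (-s) ≤ P.ncard ∧
          ∀ (x : EuclideanSpace ℝ (Fin d)) (r : ℝ), δ ≤ r →
            ((P ∩ Metric.ball x r).ncard : ℝ) ≤ K * (r / δ) ^ s := by
  classical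
  have hκpos : (0:ℝ) < ((1:ℝ) + (2 + Real.sqrt d)^d)⁻¹ := by positivity
  have hKpos : (0:ℝ) < (2:ℝ)*12^d + 2^(2*d+1) := by positivity
  refine ⟨((1:ℝ) + (2 + Real.sqrt d)^d)⁻¹, 2*12^d + 2^(2*d+1), hκpos, hKpos, ?_⟩
  intro s t δ c C P₀ hs hst htd hδ hc hcC hsub hfin hsep hcard hreg
  by_cases hδ1 : δ ≤ 1
  · exact main_case d s t δ c C P₀ hs hst htd hδ hc hcC hsub hfin hcard hreg hδ1
  · -- δ > 1 : a singleton works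
    push_neg at hδ1
    have hC0 : (0:ℝ) < C := lt_trans hc hcC
    have hne : P₀.Nonempty := by
      rw [Set.nonempty_iff_ne_empty]
      intro h
      rw [h] at hcard
      simp at hcard
      have : (0:ℝ) < c * δ^(-t) := by positivity
      linarith
    obtain ⟨p₀, hp₀⟩ := hne
    refine ⟨{p₀}, by simpa using hp₀, ?_, ?_⟩
    · rw [Set.ncard_singleton]
      have h1 : ((1:ℝ) + (2 + Real.sqrt d)^d)⁻¹ ≤ 1 := by
        rw [inv_le_one_iff₀]
        right
        have : (0:ℝ) ≤ (2 + Real.sqrt d)^d := by positivity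
        linarith
      have h2 : c / C ≤ 1 := le_of_lt ((div_lt_one hC0).mpr hcC)
      have h3 : δ^(-s) ≤ 1 :=
        Real.rpow_le_one_of_one_le_of_nonpos hδ1.le (by linarith)
      have h4 : (0:ℝ) ≤ c / C := by positivity
      have h5 : (0:ℝ) ≤ δ^(-s) := Real.rpow_nonneg (by linarith) _
      push_cast
      calc ((1:ℝ) + (2 + Real.sqrt d)^d)⁻¹ * (c / C) * δ ^ (-s)
          ≤ 1 * ((c / C) * δ ^ (-s)) := by
            rw [mul_assoc]
            exact mul_le_mul_of_nonneg_right h1 (mul_nonneg h4 h5)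
        _ = (c / C) * δ ^ (-s) := one_mul _
        _ ≤ 1 * 1 := mul_le_mul h2 h3 h5 zero_le_one
        _ = 1 := mul_one 1
    · intro x r hr
      have h1 : (({p₀} : Set (EuclideanSpace ℝ (Fin d))) ∩ Metric.ball x r).ncard ≤ 1 := by
        apply le_trans (Set.ncard_le_ncard Set.inter_subset_left (Set.finite_singleton _))
        simp
      have h2 : (1:ℝ) ≤ (r/δ)^s := by
        have hrδ : (1:ℝ) ≤ r / δ := (one_le_div hδ).mpr hr
        calc (1:ℝ) = (1:ℝ)^s := (Real.one_rpow s).symm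
          _ ≤ (r/δ)^s := Real.rpow_le_rpow (by norm_num) hrδ hs
      have h3 : (1:ℝ) ≤ 2*12^d + 2^(2*d+1) := by
        have h12 : (1:ℝ) ≤ 12^d := one_le_pow₀ (by norm_num)
        have h2p : (0:ℝ) < 2^(2*d+1) := by positivity
        nlinarith
      calc ((({p₀} : Set (EuclideanSpace ℝ (Fin d))) ∩ Metric.ball x r).ncard : ℝ) ≤ 1 := by
            exact_mod_cast h1
        _ ≤ (2*12^d + 2^(2*d+1)) * (r/δ)^s := by nlinarith
end

section
/- Let a > 0, s ≥ 1, ε > 0, A ≥ 1, 0 < δ < 1, and let P ⊆ B(0,1) ⊆ ℝ² be a δ-separated set such that |P ∩ B(x,r)| ≤ A δ^{−ε} (r/δ)^s for all x ∈ ℝ² and r ≥ δ, with |P| ≥ a δ^{ε−s}. Then there exists a δ-separated subset P' ⊆ P with |P'| ≥ κ (a/A) δ^{2ε−1} and |P' ∩ B(x,r)| ≤ K (r/δ) for all x ∈ ℝ² and r ≥ δ, where κ > 0 and K < ∞ are absolute constants. -/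
open Metric Set

noncomputable def cellIdx (j : ℕ) (x : EuclideanSpace ℝ (Fin 2)) : ℤ × ℤ :=
  (⌊(2:ℝ)^j * x 0⌋, ⌊(2:ℝ)^j * x 1⌋)

lemma floor_half_eq (t : ℝ) : ⌊t/2⌋ = ⌊t⌋ / 2 := by
  have h1 : (⌊t⌋:ℝ) ≤ t := Int.floor_le t
  have h2 : t < ⌊t⌋ + 1 := Int.lt_floor_add_one t
  have k1 : 2*(⌊t⌋/2) ≤ ⌊t⌋ := by omega
  have k2 : ⌊t⌋ ≤ 2*(⌊t⌋/2)+1 := by omega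
  have c1 : ((2*(⌊t⌋/2):ℤ):ℝ) ≤ (⌊t⌋:ℝ) := by exact_mod_cast k1
  have c2 : ((⌊t⌋:ℤ):ℝ) ≤ ((2*(⌊t⌋/2)+1:ℤ):ℝ) := by exact_mod_cast k2
  rw [Int.floor_eq_iff]
  push_cast at c1 c2 ⊢
  constructor <;> linarith

lemma cell_nest_one {j : ℕ} {x y : EuclideanSpace ℝ (Fin 2)}
    (h : cellIdx (j+1) x = cellIdx (j+1) y) : cellIdx j x = cellIdx j y := by
  have e : ∀ u : EuclideanSpace ℝ (Fin 2), ∀ i, (2:ℝ)^j * u i = ((2:ℝ)^(j+1) * u i)/2 := by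
    intro u i; ring
  have h1 := congrArg Prod.fst h
  have h2 := congrArg Prod.snd h
  simp only [cellIdx] at h1 h2 ⊢
  refine Prod.ext ?_ ?_
  · show ⌊(2:ℝ)^j * x 0⌋ = ⌊(2:ℝ)^j * y 0⌋
    rw [e x 0, e y 0, floor_half_eq, floor_half_eq, h1]
  · show ⌊(2:ℝ)^j * x 1⌋ = ⌊(2:ℝ)^j * y 1⌋
    rw [e x 1, e y 1, floor_half_eq, floor_half_eq, h2]

lemma cell_nest_add (d : ℕ) : ∀ (j : ℕ) {x y : EuclideanSpace ℝ (Fin 2)},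
    cellIdx (j+d) x = cellIdx (j+d) y → cellIdx j x = cellIdx j y := by
  induction d with
  | zero => intro j x y h; exact h
  | succ d ih => intro j x y h; exact ih j (cell_nest_one h)

lemma cell_nest {j j' : ℕ} (hjj : j ≤ j') {x y : EuclideanSpace ℝ (Fin 2)}
    (h : cellIdx j' x = cellIdx j' y) : cellIdx j x = cellIdx j y := by
  obtain ⟨d, rfl⟩ := Nat.exists_eq_add_of_le hjj
  exact cell_nest_add d j h

lemma cell_dist {j : ℕ} {x y : EuclideanSpace ℝ (Fin 2)}
    (h : cellIdx j x = cellIdx j y) : dist x y < 2/2^j := by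
  have h1 := congrArg Prod.fst h
  have h2 := congrArg Prod.snd h
  simp only [cellIdx] at h1 h2
  have hp : (0:ℝ) < 2^j := by positivity
  have key : ∀ u v : ℝ, ⌊(2:ℝ)^j * u⌋ = ⌊(2:ℝ)^j * v⌋ → |u - v| < 1/2^j := by
    intro u v huv
    have d0 : |(2:ℝ)^j * u - (2:ℝ)^j * v| < 1 := Int.abs_sub_lt_one_of_floor_eq_floor huv
    rw [show (2:ℝ)^j * u - (2:ℝ)^j * v = (2:ℝ)^j * (u - v) by ring, abs_mul,
      abs_of_pos hp] at d0
    rw [lt_div_iff₀' hp]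
    exact d0
  have e0 := key _ _ h1
  have e1 := key _ _ h2
  rw [EuclideanSpace.dist_eq]
  have hs : ∑ i, dist (x i) (y i) ^ 2 = dist (x 0) (y 0)^2 + dist (x 1) (y 1)^2 :=
    Fin.sum_univ_two _
  rw [hs, Real.dist_eq, Real.dist_eq]
  have a0 : |x 0 - y 0| ^ 2 < (1/2^j)^2 := by
    apply sq_lt_sq' <;> [linarith [abs_nonneg (x 0 - y 0), hp]; exact e0]
  have a1 : |x 1 - y 1| ^ 2 < (1/2^j)^2 := by
    apply sq_lt_sq' <;> [linarith [abs_nonneg (x 1 - y 1), hp]; exact e1]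
  have hb : |x 0 - y 0|^2 + |x 1 - y 1|^2 < (2/2^j)^2 := by
    have h4 : ((1:ℝ)/2^j)^2 + (1/2^j)^2 ≤ (2/2^j)^2 := by
      have l1 : ((2:ℝ)/2^j)^2 = 4/((2^j)^2) := by ring
      have l2 : ((1:ℝ)/2^j)^2 = 1/((2^j)^2) := by ring
      rw [l1, l2, ← add_div, div_le_div_iff₀ (by positivity) (by positivity)]
      nlinarith [hp]
    linarith
  have hpos : (0:ℝ) < 2/2^j := by positivity
  calc Real.sqrt (|x 0 - y 0|^2 + |x 1 - y 1|^2)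
      < Real.sqrt ((2/2^j)^2) := Real.sqrt_lt_sqrt (by positivity) hb
    _ = 2/2^j := Real.sqrt_sq hpos.le

lemma coord_le_dist (x y : EuclideanSpace ℝ (Fin 2)) (i : Fin 2) :
    |x i - y i| ≤ dist x y := by
  rw [EuclideanSpace.dist_eq]
  have hs : ∑ k, dist (x k) (y k) ^ 2 = dist (x 0) (y 0)^2 + dist (x 1) (y 1)^2 :=
    Fin.sum_univ_two _
  rw [hs]
  have hi : |x i - y i|^2 ≤ dist (x 0) (y 0)^2 + dist (x 1) (y 1)^2 := by
    fin_cases i <;> simp [Real.dist_eq, sq_abs] <;>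
      nlinarith [sq_nonneg (x 0 - y 0), sq_nonneg (x 1 - y 1)]
  calc |x i - y i| = Real.sqrt (|x i - y i|^2) := (Real.sqrt_sq (abs_nonneg _)).symm
    _ ≤ _ := Real.sqrt_le_sqrt hi

lemma coord_lt_one {x : EuclideanSpace ℝ (Fin 2)}
    (hx : x ∈ Metric.ball (0:EuclideanSpace ℝ (Fin 2)) 1) (i : Fin 2) : |x i| < 1 := by
  have hd : dist x 0 < 1 := mem_ball.1 hx
  have h := coord_le_dist x 0 i
  have h0 : (0:EuclideanSpace ℝ (Fin 2)) i = 0 := rfl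
  rw [h0, sub_zero] at h
  linarith

set_option maxHeartbeats 1000000 in
lemma geo_bound (a s ε A δ : ℝ) (P : Set (EuclideanSpace ℝ (Fin 2)))
    (ha : 0 < a) (hs : 1 ≤ s) (hε : 0 < ε) (hA : 1 ≤ A) (hδ0 : 0 < δ) (hδ1 : δ < 1)
    (hPball : P ⊆ Metric.ball 0 1) (hPfin : P.Finite) (hPsep : IsSeparated' δ P)
    (hcnt : ∀ (x : EuclideanSpace ℝ (Fin 2)) (r : ℝ), δ ≤ r →
      ((P ∩ Metric.ball x r).ncard : ℝ) ≤ A * δ ^ (-ε) * (r / δ) ^ s)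
    (n : ℕ) (hn : 2 ≤ δ * 2^n) (hn4 : δ * 2^n ≤ 4) :
    ∀ j : ℕ, 1 ≤ j → j ≤ n → ∀ z : ℤ × ℤ,
      (δ ^ (ε+s-1) / (2*A)) * (((hPfin.toFinset.filter (fun x => cellIdx j x = z)).card : ℝ))
        ≤ (2:ℝ)^n / 2^j / 2 := by
  classical
  set F := hPfin.toFinset with hF
  set β := δ ^ (ε+s-1) / (2*A) with hβ
  have hApos : (0:ℝ) < A := by linarith
  have hβpos : 0 < β := by positivity
  intro j hj1 hjn z
  by_cases hne : (F.filter (fun x => cellIdx j x = z)).Nonempty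
  · obtain ⟨p, hp⟩ := hne
    set r := max (2/2^j : ℝ) δ with hr
    have hrδ : δ ≤ r := le_max_right _ _
    have hr1 : r ≤ 1 := by
      apply max_le ?_ hδ1.le
      rw [div_le_one (by positivity)]
      calc (2:ℝ) = 2^1 := (pow_one 2).symm
        _ ≤ 2^j := pow_le_pow_right₀ one_le_two hj1
    have hrpos : (0:ℝ) < r := lt_of_lt_of_le hδ0 hrδ
    have hsub : (↑(F.filter (fun x => cellIdx j x = z)) : Set _) ⊆ P ∩ Metric.ball p r := by
      intro y hy
      simp only [Finset.coe_filter, Set.mem_setOf_eq] at hy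
      obtain ⟨hyF, hyz⟩ := hy
      have hyP : y ∈ P := by rwa [hF, Set.Finite.mem_toFinset] at hyF
      refine ⟨hyP, ?_⟩
      have hpz : cellIdx j p = z := (Finset.mem_filter.1 hp).2
      have hd := cell_dist (hyz.trans hpz.symm)
      exact mem_ball.2 (lt_of_lt_of_le hd (le_max_left _ _))
    have hcard : ((F.filter (fun x => cellIdx j x = z)).card : ℝ)
        ≤ ((P ∩ Metric.ball p r).ncard : ℝ) := by
      have hfin : (P ∩ Metric.ball p r).Finite := hPfin.inter_of_left _
      have h2 := Set.ncard_le_ncard hsub hfin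
      rw [Set.ncard_coe_finset] at h2
      exact_mod_cast h2
    have hb := hcnt p r hrδ
    have hfrac1 : (1:ℝ) ≤ r/δ := (one_le_div hδ0).2 hrδ
    have hpow : (r/δ)^s ≤ (r/δ) * δ^(1-s) := by
      have e1 : (r/δ)^s = (r/δ)^(s-1) * (r/δ) := by
        have h := Real.rpow_add (show (0:ℝ) < r/δ by positivity) (s-1) 1
        rw [Real.rpow_one, show s-1+1 = s by ring] at h
        exact h
      have e2 : (r/δ)^(s-1) ≤ (1/δ)^(s-1) := by
        apply Real.rpow_le_rpow (by positivity) (by gcongr) (by linarith)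
      have e3 : ((1:ℝ)/δ)^(s-1) = δ^(1-s) := by
        rw [one_div, Real.inv_rpow hδ0.le, ← Real.rpow_neg hδ0.le,
          show -(s-1) = 1-s by ring]
      rw [e1]
      calc (r/δ)^(s-1) * (r/δ) ≤ δ^(1-s) * (r/δ) := by
            apply mul_le_mul_of_nonneg_right (e2.trans_eq e3) (by positivity)
        _ = (r/δ) * δ^(1-s) := by ring
    have hAcan : A/(2*A) = 1/2 := by rw [mul_comm, ← div_div, div_self (ne_of_gt hApos)]
    have hone : δ^(ε+s-1) * δ^(-ε) * δ^(1-s) = 1 := by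
      rw [← Real.rpow_add hδ0, ← Real.rpow_add hδ0,
        show (ε+s-1) + -ε + (1-s) = 0 by ring, Real.rpow_zero]
    have hcollapse : β * (A * δ^(-ε) * ((r/δ) * δ^(1-s))) = r/δ/2 := by
      rw [hβ]
      calc δ ^ (ε+s-1) / (2*A) * (A * δ^(-ε) * ((r/δ) * δ^(1-s)))
          = (δ^(ε+s-1) * δ^(-ε) * δ^(1-s)) * (A/(2*A)) * (r/δ) := by ring
        _ = 1 * (1/2) * (r/δ) := by rw [hone, hAcan]
        _ = r/δ/2 := by ring
    have step1 : β * ((F.filter (fun x => cellIdx j x = z)).card : ℝ) ≤ r/δ/2 := by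
      calc β * ((F.filter (fun x => cellIdx j x = z)).card : ℝ)
          ≤ β * (A * δ^(-ε) * (r/δ)^s) :=
            mul_le_mul_of_nonneg_left (hcard.trans hb) hβpos.le
        _ ≤ β * (A * δ^(-ε) * ((r/δ) * δ^(1-s))) := by
            apply mul_le_mul_of_nonneg_left ?_ hβpos.le
            apply mul_le_mul_of_nonneg_left hpow (by positivity)
        _ = r/δ/2 := hcollapse
    have hrbound : r/δ ≤ (2:ℝ)^n/2^j := by
      rw [div_le_div_iff₀ hδ0 (by positivity)]
      have h2j : (2:ℝ)^j ≤ 2^n := pow_le_pow_right₀ one_le_two hjn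
      have c1 : (2/2^j) * 2^j ≤ 2^n * δ := by
        rw [div_mul_cancel₀]
        · nlinarith
        · positivity
      have c2 : δ * 2^j ≤ 2^n * δ := by nlinarith
      rcases max_cases (2/2^j : ℝ) δ with ⟨he, _⟩ | ⟨he, _⟩ <;> rw [hr, he]
      · exact c1
      · exact c2
    linarith
  · rw [Finset.not_nonempty_iff_eq_empty] at hne
    rw [hne]
    simp only [Finset.card_empty, Nat.cast_zero, mul_zero]
    positivity

set_option maxHeartbeats 1000000 in
lemma main_extract (F : Finset (EuclideanSpace ℝ (Fin 2))) (n : ℕ) (β : ℝ)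
    (hβ0 : 0 ≤ β) (hβ1 : β ≤ 1)
    (hFsep : ∀ x ∈ F, ∀ y ∈ F, cellIdx n x = cellIdx n y → x = y)
    (hGEO : ∀ j : ℕ, 1 ≤ j → j ≤ n → ∀ z : ℤ × ℤ,
      β * ((F.filter (fun x => cellIdx j x = z)).card : ℝ) ≤ (2:ℝ)^n / 2^j / 2) :
    ∀ k : ℕ, k ≤ n - 1 → ∀ z : ℤ × ℤ, ∃ S : Finset (EuclideanSpace ℝ (Fin 2)),
      S ⊆ F.filter (fun x => cellIdx (n-k) x = z) ∧
      (∀ j', n - k ≤ j' → j' ≤ n → ∀ w : ℤ × ℤ,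
        ((S.filter (fun x => cellIdx j' x = w)).card : ℝ) ≤ (2:ℝ)^n / 2^j') ∧
      β * ((F.filter (fun x => cellIdx (n-k) x = z)).card : ℝ) ≤ (S.card : ℝ) := by
  classical
  intro k
  induction k with
  | zero =>
    intro _ z
    simp only [Nat.sub_zero]
    refine ⟨F.filter (fun x => cellIdx n x = z), Finset.Subset.refl _, ?_, ?_⟩
    · intro j' h1 h2 w
      have hj : j' = n := le_antisymm h2 h1
      rw [hj, div_self (by positivity : ((2:ℝ)^n) ≠ 0)]
      have hle1 : (F.filter (fun x => cellIdx n x = z)).card ≤ 1 := by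
        apply Finset.card_le_one.2
        intro a ha b hb
        obtain ⟨haF, haz⟩ := Finset.mem_filter.1 ha
        obtain ⟨hbF, hbz⟩ := Finset.mem_filter.1 hb
        exact hFsep a haF b hbF (haz.trans hbz.symm)
      have h3 := le_trans (Finset.card_filter_le (F.filter (fun x => cellIdx n x = z))
        (fun x => cellIdx n x = w)) hle1
      exact_mod_cast h3
    · calc β * ((F.filter (fun x => cellIdx n x = z)).card : ℝ)
          ≤ 1 * ((F.filter (fun x => cellIdx n x = z)).card : ℝ) :=
            mul_le_mul_of_nonneg_right hβ1 (Nat.cast_nonneg _)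
        _ = _ := one_mul _
  | succ k ih =>
    intro hk1 z
    have hk : k ≤ n - 1 := le_trans (Nat.le_succ k) hk1
    have hn2 : k + 2 ≤ n := by omega
    set j := n - (k+1) with hjdef
    have hj1 : 1 ≤ j := by omega
    have hjn : j ≤ n := by omega
    have hjsucc : n - k = j + 1 := by omega
    choose Sw hSw1 hSw2 hSw3 using ih hk
    simp only [hjsucc] at hSw1 hSw2 hSw3
    set W := (F.filter (fun x => cellIdx j x = z)).image (cellIdx (j+1)) with hWdef
    have hWmem : ∀ w ∈ W, ∀ x ∈ F, cellIdx (j+1) x = w → cellIdx j x = z := by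
      intro w hw x hxF hxw
      obtain ⟨x', hx', hx'w⟩ := Finset.mem_image.1 hw
      obtain ⟨hx'F, hx'z⟩ := Finset.mem_filter.1 hx'
      exact (cell_nest (Nat.le_succ j) (hxw.trans hx'w.symm)).trans hx'z
    have hpart : F.filter (fun x => cellIdx j x = z)
        = W.biUnion (fun w => F.filter (fun x => cellIdx (j+1) x = w)) := by
      ext x
      simp only [Finset.mem_biUnion, Finset.mem_filter]
      constructor
      · rintro ⟨hxF, hxz⟩
        exact ⟨cellIdx (j+1) x,
          Finset.mem_image.2 ⟨x, Finset.mem_filter.2 ⟨hxF, hxz⟩, rfl⟩, hxF, rfl⟩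
      · rintro ⟨w, hwW, hxF, hxw⟩
        exact ⟨hxF, hWmem w hwW x hxF hxw⟩
    have hdisjF : ∀ w1 ∈ W, ∀ w2 ∈ W, w1 ≠ w2 →
        Disjoint (F.filter (fun x => cellIdx (j+1) x = w1))
          (F.filter (fun x => cellIdx (j+1) x = w2)) := by
      intro w1 _ w2 _ hne
      apply Finset.disjoint_left.2
      intro x hx1 hx2
      exact hne ((Finset.mem_filter.1 hx1).2.symm.trans (Finset.mem_filter.1 hx2).2)
    have hdisjS : ∀ w1 ∈ W, ∀ w2 ∈ W, w1 ≠ w2 → Disjoint (Sw w1) (Sw w2) := by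
      intro w1 h1 w2 h2 hne
      exact (hdisjF w1 h1 w2 h2 hne).mono (hSw1 w1) (hSw1 w2)
    set S' := W.biUnion Sw with hS'def
    have hS'sub : S' ⊆ F.filter (fun x => cellIdx j x = z) := by
      rw [hpart, hS'def]
      intro x hx
      obtain ⟨w, hw, hxw⟩ := Finset.mem_biUnion.1 hx
      exact Finset.mem_biUnion.2 ⟨w, hw, hSw1 w hxw⟩
    have hS'low : β * ((F.filter (fun x => cellIdx j x = z)).card : ℝ) ≤ (S'.card : ℝ) := by
      rw [hpart, Finset.card_biUnion hdisjF, hS'def, Finset.card_biUnion hdisjS]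
      push_cast
      rw [Finset.mul_sum]
      exact Finset.sum_le_sum (fun w _ => hSw3 w)
    have hS'mid : ∀ j', j+1 ≤ j' → j' ≤ n → ∀ w' : ℤ × ℤ,
        ((S'.filter (fun x => cellIdx j' x = w')).card : ℝ) ≤ (2:ℝ)^n/2^j' := by
      intro j' ha hb w'
      by_cases hne : (S'.filter (fun x => cellIdx j' x = w')).Nonempty
      · obtain ⟨x₀, hx₀⟩ := hne
        obtain ⟨hx₀S, hx₀c⟩ := Finset.mem_filter.1 hx₀
        obtain ⟨w₀, hw₀W, hx₀w⟩ := Finset.mem_biUnion.1 hx₀S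
        have hsub2 : S'.filter (fun x => cellIdx j' x = w')
            ⊆ (Sw w₀).filter (fun x => cellIdx j' x = w') := by
          intro y hy
          obtain ⟨hyS, hyc⟩ := Finset.mem_filter.1 hy
          obtain ⟨w₁, hw₁W, hyw⟩ := Finset.mem_biUnion.1 hyS
          have hcc : cellIdx (j+1) y = cellIdx (j+1) x₀ := cell_nest ha (hyc.trans hx₀c.symm)
          have hy1 : cellIdx (j+1) y = w₁ := (Finset.mem_filter.1 (hSw1 w₁ hyw)).2
          have hx1 : cellIdx (j+1) x₀ = w₀ := (Finset.mem_filter.1 (hSw1 w₀ hx₀w)).2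
          have hww : w₁ = w₀ := by rw [← hy1, hcc, hx1]
          exact Finset.mem_filter.2 ⟨hww ▸ hyw, hyc⟩
        calc ((S'.filter (fun x => cellIdx j' x = w')).card : ℝ)
            ≤ (((Sw w₀).filter (fun x => cellIdx j' x = w')).card : ℝ) := by
              exact_mod_cast Finset.card_le_card hsub2
          _ ≤ _ := hSw2 w₀ j' ha hb w'
      · rw [Finset.not_nonempty_iff_eq_empty] at hne
        rw [hne]
        simp only [Finset.card_empty, Nat.cast_zero]
        positivity
    have hpow2 : ((2^(k+1) : ℕ) : ℝ) = (2:ℝ)^n / 2^j := by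
      push_cast
      rw [eq_div_iff (by positivity : ((2:ℝ)^j) ≠ 0), ← pow_add]
      congr 1
      omega
    by_cases hbig : S'.card ≤ 2^(k+1)
    · refine ⟨S', hS'sub, ?_, hS'low⟩
      intro j' h1 h2 w'
      rcases Nat.lt_or_ge j' (j+1) with hlt | hge
      · have hjj : j' = j := by omega
        rw [hjj]
        calc ((S'.filter (fun x => cellIdx j x = w')).card:ℝ) ≤ (S'.card : ℝ) := by
              exact_mod_cast Finset.card_filter_le _ _
          _ ≤ ((2^(k+1):ℕ):ℝ) := by exact_mod_cast hbig
          _ = (2:ℝ)^n/2^j := hpow2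
      · exact hS'mid j' hge h2 w'
    · push_neg at hbig
      obtain ⟨S, hSsub, hScard⟩ := Finset.exists_subset_card_eq (s := S') (n := 2^(k+1)) hbig.le
      refine ⟨S, hSsub.trans hS'sub, ?_, ?_⟩
      · intro j' h1 h2 w'
        rcases Nat.lt_or_ge j' (j+1) with hlt | hge
        · have hjj : j' = j := by omega
          rw [hjj]
          calc ((S.filter (fun x => cellIdx j x = w')).card:ℝ) ≤ (S.card:ℝ) := by
                exact_mod_cast Finset.card_filter_le _ _
            _ = ((2^(k+1):ℕ):ℝ) := by exact_mod_cast hScard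
            _ = _ := hpow2
        · calc ((S.filter (fun x => cellIdx j' x = w')).card:ℝ)
              ≤ ((S'.filter (fun x => cellIdx j' x = w')).card:ℝ) := by
                exact_mod_cast Finset.card_le_card (Finset.filter_subset_filter _ hSsub)
            _ ≤ _ := hS'mid j' hge h2 w'
      · have hgeo := hGEO j hj1 hjn z
        rw [hScard]
        have hnn : (0:ℝ) ≤ (2:ℝ)^n/2^j := by positivity
        calc β * ((F.filter (fun x => cellIdx j x = z)).card : ℝ)
            ≤ (2:ℝ)^n/2^j/2 := hgeo
          _ ≤ (2:ℝ)^n/2^j := by linarith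
          _ = ((2^(k+1):ℕ):ℝ) := hpow2.symm

set_option maxHeartbeats 2000000 in
/-- There are absolute constants `κ > 0` and `K < ∞` such that: if `a > 0`, `s ≥ 1`,
`ε > 0`, `A ≥ 1`, `0 < δ < 1`, and `P ⊆ B(0,1) ⊆ ℝ²` is δ-separated with
`|P ∩ B(x,r)| ≤ A δ^{−ε} (r/δ)^s` for all `x` and `r ≥ δ`, and `|P| ≥ a δ^{ε−s}`,
then there is a δ-separated `P' ⊆ P` with `|P'| ≥ κ (a/A) δ^{2ε−1}` and
`|P' ∩ B(x,r)| ≤ K (r/δ)` for all `x` and `r ≥ δ`. -/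
theorem stmt_3 :
    ∃ κ K : ℝ, 0 < κ ∧ 0 < K ∧
      ∀ (a s ε A δ : ℝ) (P : Set (EuclideanSpace ℝ (Fin 2))),
        0 < a → 1 ≤ s → 0 < ε → 1 ≤ A → 0 < δ → δ < 1 →
        P ⊆ Metric.ball 0 1 → P.Finite → IsSeparated' δ P →
        (∀ (x : EuclideanSpace ℝ (Fin 2)) (r : ℝ), δ ≤ r →
          ((P ∩ Metric.ball x r).ncard : ℝ) ≤ A * δ ^ (-ε) * (r / δ) ^ s) →
        a * δ ^ (ε - s) ≤ P.ncard →
        ∃ P' ⊆ P, IsSeparated' δ P' ∧ κ * (a / A) * δ ^ (2 * ε - 1) ≤ P'.ncard ∧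
          ∀ (x : EuclideanSpace ℝ (Fin 2)) (r : ℝ), δ ≤ r →
            ((P' ∩ Metric.ball x r).ncard : ℝ) ≤ K * (r / δ) := by
  classical
  refine ⟨1/2, 100, by norm_num, by norm_num, ?_⟩
  intro a s ε A δ P ha hs hε hA hδ0 hδ1 hPball hPfin hPsep hcnt hcard
  have hApos : (0:ℝ) < A := by linarith
  -- choose the scale n
  have hex : ∃ n : ℕ, 2 ≤ δ * 2^n := by
    obtain ⟨n, hn⟩ := pow_unbounded_of_one_lt (2/δ) one_lt_two
    exact ⟨n, by rw [div_lt_iff₀ hδ0] at hn; nlinarith⟩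
  set n := Nat.find hex with hndef
  have hn : 2 ≤ δ * 2^n := Nat.find_spec hex
  have hnpos : 1 ≤ n := by
    by_contra h
    push_neg at h
    interval_cases n
    · simp at hn; linarith
  have hn4 : δ * 2^n ≤ 4 := by
    have hmin := Nat.find_min hex (show n - 1 < n by omega)
    push_neg at hmin
    have : (2:ℝ)^n = 2 * 2^(n-1) := by
      rw [← pow_succ']
      congr 1
      omega
    rw [this]
    nlinarith
  set F := hPfin.toFinset with hFdef
  have hmemF : ∀ y, y ∈ F ↔ y ∈ P := fun y => hPfin.mem_toFinset
  set β := δ ^ (ε+s-1) / (2*A) with hβdef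
  have hβpos : 0 < β := by positivity
  have hβ1 : β ≤ 1 := by
    rw [hβdef, div_le_one (by positivity)]
    have h1 : δ ^ (ε+s-1) ≤ 1 := Real.rpow_le_one hδ0.le hδ1.le (by linarith)
    linarith
  have hFsep : ∀ x ∈ F, ∀ y ∈ F, cellIdx n x = cellIdx n y → x = y := by
    intro x hx y hy hcell
    by_contra hne
    have hd := cell_dist hcell
    have hsep := hPsep x ((hmemF x).1 hx) y ((hmemF y).1 hy) hne
    have h2n : 2/2^n ≤ δ := by
      rw [div_le_iff₀ (by positivity : (0:ℝ) < 2^n)]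
      linarith [hn]
    linarith
  have hGEO := geo_bound a s ε A δ P ha hs hε hA hδ0 hδ1 hPball hPfin hPsep hcnt n hn hn4
  choose Sw hSw1 hSw2 hSw3 using main_extract F n β hβpos.le hβ1 hFsep hGEO (n-1) le_rfl
  have hone : n - (n-1) = 1 := by omega
  simp only [hone] at hSw1 hSw2 hSw3
  set W := F.image (cellIdx 1) with hWdef
  set Pf := W.biUnion Sw with hPfdef
  have hdisjS : ∀ w1 ∈ W, ∀ w2 ∈ W, w1 ≠ w2 → Disjoint (Sw w1) (Sw w2) := by
    intro w1 _ w2 _ hne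
    apply Finset.disjoint_left.2
    intro x hx1 hx2
    exact hne (((Finset.mem_filter.1 (hSw1 w1 hx1)).2).symm.trans
      ((Finset.mem_filter.1 (hSw1 w2 hx2)).2))
  have hPfsubF : Pf ⊆ F := by
    intro x hx
    obtain ⟨w, _, hxw⟩ := Finset.mem_biUnion.1 hx
    exact (Finset.mem_filter.1 (hSw1 w hxw)).1
  have hPfsubP : (↑Pf : Set (EuclideanSpace ℝ (Fin 2))) ⊆ P := by
    intro x hx
    exact (hmemF x).1 (hPfsubF (by exact_mod_cast hx))
  -- the per-cell counting bound for Pf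
  have HPf : ∀ j, 1 ≤ j → j ≤ n → ∀ w' : ℤ × ℤ,
      ((Pf.filter (fun x => cellIdx j x = w')).card : ℝ) ≤ (2:ℝ)^n/2^j := by
    intro j hj1 hjn w'
    by_cases hne : (Pf.filter (fun x => cellIdx j x = w')).Nonempty
    · obtain ⟨x₀, hx₀⟩ := hne
      obtain ⟨hx₀S, hx₀c⟩ := Finset.mem_filter.1 hx₀
      obtain ⟨w₀, hw₀W, hx₀w⟩ := Finset.mem_biUnion.1 hx₀S
      have hsub2 : Pf.filter (fun x => cellIdx j x = w')
          ⊆ (Sw w₀).filter (fun x => cellIdx j x = w') := by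
        intro y hy
        obtain ⟨hyS, hyc⟩ := Finset.mem_filter.1 hy
        obtain ⟨w₁, hw₁W, hyw⟩ := Finset.mem_biUnion.1 hyS
        have hcc : cellIdx 1 y = cellIdx 1 x₀ := cell_nest hj1 (hyc.trans hx₀c.symm)
        have hy1 : cellIdx 1 y = w₁ := (Finset.mem_filter.1 (hSw1 w₁ hyw)).2
        have hx1 : cellIdx 1 x₀ = w₀ := (Finset.mem_filter.1 (hSw1 w₀ hx₀w)).2
        have hww : w₁ = w₀ := by rw [← hy1, hcc, hx1]
        exact Finset.mem_filter.2 ⟨hww ▸ hyw, hyc⟩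
      calc ((Pf.filter (fun x => cellIdx j x = w')).card : ℝ)
          ≤ (((Sw w₀).filter (fun x => cellIdx j x = w')).card : ℝ) := by
            exact_mod_cast Finset.card_le_card hsub2
        _ ≤ _ := hSw2 w₀ j hj1 hjn w'
    · rw [Finset.not_nonempty_iff_eq_empty] at hne
      rw [hne]
      simp only [Finset.card_empty, Nat.cast_zero]
      positivity
  -- cardinality lower bound
  have hpartF : F = W.biUnion (fun w => F.filter (fun x => cellIdx 1 x = w)) := by
    ext x
    simp only [Finset.mem_biUnion, Finset.mem_filter]
    constructor
    · intro hx
      exact ⟨cellIdx 1 x, Finset.mem_image.2 ⟨x, hx, rfl⟩, hx, rfl⟩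
    · rintro ⟨w, _, hxF, _⟩
      exact hxF
  have hdisjF : ∀ w1 ∈ W, ∀ w2 ∈ W, w1 ≠ w2 →
      Disjoint (F.filter (fun x => cellIdx 1 x = w1)) (F.filter (fun x => cellIdx 1 x = w2)) := by
    intro w1 _ w2 _ hne
    apply Finset.disjoint_left.2
    intro x hx1 hx2
    exact hne ((Finset.mem_filter.1 hx1).2.symm.trans (Finset.mem_filter.1 hx2).2)
  have hPflow : β * (F.card : ℝ) ≤ (Pf.card : ℝ) := by
    conv_lhs => rw [hpartF]
    rw [Finset.card_biUnion hdisjF, hPfdef, Finset.card_biUnion hdisjS]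
    push_cast
    rw [Finset.mul_sum]
    exact Finset.sum_le_sum (fun w _ => hSw3 w)
  have hncardF : (P.ncard : ℝ) = (F.card : ℝ) := by
    rw [← Set.ncard_coe_finset F, hFdef, hPfin.coe_toFinset]
  refine ⟨↑Pf, hPfsubP, ?_, ?_, ?_⟩
  · intro p hp q hq hpq
    exact hPsep p (hPfsubP hp) q (hPfsubP hq) hpq
  · -- size
    have hδadd : δ^(ε+s-1) * δ^(ε-s) = δ^(2*ε-1) := by
      rw [← Real.rpow_add hδ0]
      ring_nf
    have hkey : 1/2*(a/A)*δ^(2*ε-1) = β * (a*δ^(ε-s)) := by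
      rw [hβdef, ← hδadd]
      field_simp
    rw [Set.ncard_coe_finset]
    calc 1/2*(a/A)*δ^(2*ε-1) = β * (a*δ^(ε-s)) := hkey
      _ ≤ β * (P.ncard : ℝ) := mul_le_mul_of_nonneg_left hcard hβpos.le
      _ = β * (F.card : ℝ) := by rw [hncardF]
      _ ≤ (Pf.card : ℝ) := hPflow
  · -- counting
    intro x r hr
    have hrpos : (0:ℝ) < r := lt_of_lt_of_le hδ0 hr
    have h2n4 : (2:ℝ)^n ≤ 4/δ := by
      rw [le_div_iff₀ hδ0]
      nlinarith
    rcases le_or_gt (1/2 : ℝ) r with hhalf | hhalf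
    · -- big radius
      have hsub : (↑Pf : Set (EuclideanSpace ℝ (Fin 2))) ∩ Metric.ball x r ⊆ ↑Pf :=
        Set.inter_subset_left
      have h1 : ((↑Pf ∩ Metric.ball x r : Set (EuclideanSpace ℝ (Fin 2))).ncard : ℝ)
          ≤ (Pf.card : ℝ) := by
        have := Set.ncard_le_ncard hsub (Pf.finite_toSet)
        rw [Set.ncard_coe_finset] at this
        exact_mod_cast this
      have hW16 : (W.card : ℝ) ≤ 16 := by
        have hsubW : W ⊆ (Finset.Icc (-2:ℤ) 1) ×ˢ (Finset.Icc (-2:ℤ) 1) := by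
          intro w hw
          obtain ⟨y, hyF, rfl⟩ := Finset.mem_image.1 hw
          have hyP : y ∈ P := (hmemF y).1 hyF
          have hy0 := coord_lt_one (hPball hyP) 0
          have hy1 := coord_lt_one (hPball hyP) 1
          have habs0 := abs_lt.1 hy0
          have habs1 := abs_lt.1 hy1
          simp only [Finset.mem_product, Finset.mem_Icc, cellIdx]
          constructor <;> constructor
          · exact Int.le_floor.2 (by push_cast; nlinarith)
          · have : ((2:ℝ)^1 * y 0) < 2 := by norm_num; nlinarith
            have := Int.floor_lt.2 (show (2:ℝ)^1 * y 0 < ((2:ℤ):ℝ) by push_cast; linarith)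
            omega
          · exact Int.le_floor.2 (by push_cast; nlinarith)
          · have := Int.floor_lt.2 (show (2:ℝ)^1 * y 1 < ((2:ℤ):ℝ) by push_cast; nlinarith)
            omega
        have := Finset.card_le_card hsubW
        have hc : ((Finset.Icc (-2:ℤ) 1) ×ˢ (Finset.Icc (-2:ℤ) 1)).card = 16 := by
          rw [Finset.card_product, Int.card_Icc]
          decide
        rw [hc] at this
        exact_mod_cast this
      have h2 : (Pf.card : ℝ) ≤ 16 * ((2:ℝ)^n/2) := by
        have hb : (Pf.card : ℕ) ≤ ∑ w ∈ W, (Sw w).card := Finset.card_biUnion_le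
        have hc : ((∑ w ∈ W, (Sw w).card : ℕ) : ℝ) = ∑ w ∈ W, ((Sw w).card : ℝ) := by push_cast; rfl
        have heach : ∀ w ∈ W, ((Sw w).card : ℝ) ≤ (2:ℝ)^n/2 := by
          intro w hw
          have hfix : Sw w = (Sw w).filter (fun y => cellIdx 1 y = w) := by
            symm
            apply Finset.filter_true_of_mem
            intro y hy
            exact (Finset.mem_filter.1 (hSw1 w hy)).2
          have := hSw2 w 1 le_rfl hnpos w
          rw [← hfix] at this
          calc ((Sw w).card : ℝ) ≤ (2:ℝ)^n/2^1 := this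
            _ = (2:ℝ)^n/2 := by norm_num
        calc (Pf.card : ℝ) ≤ ∑ w ∈ W, ((Sw w).card : ℝ) := by
              rw [← hc]; exact_mod_cast hb
          _ ≤ ∑ w ∈ W, (2:ℝ)^n/2 := Finset.sum_le_sum heach
          _ = (W.card : ℝ) * ((2:ℝ)^n/2) := by rw [Finset.sum_const, nsmul_eq_mul]
          _ ≤ 16 * ((2:ℝ)^n/2) := by
              apply mul_le_mul_of_nonneg_right hW16 (by positivity)
      have h3 : 16 * ((2:ℝ)^n/2) ≤ 32/δ := by
        have : (2:ℝ)^n ≤ 4/δ := h2n4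
        calc 16 * ((2:ℝ)^n/2) = 8 * (2:ℝ)^n := by ring
          _ ≤ 8 * (4/δ) := by linarith
          _ = 32/δ := by ring
      have h4 : 32/δ ≤ 100*(r/δ) := by
        rw [div_le_iff₀ hδ0]
        have : 100 * (r/δ) * δ = 100 * r := by field_simp
        rw [this]
        linarith
      linarith
    · -- small radius
      have hex2 : ∃ m : ℕ, 1 ≤ r * 2^m := by
        obtain ⟨m, hm⟩ := pow_unbounded_of_one_lt (1/r) one_lt_two
        exact ⟨m, by rw [div_lt_iff₀ hrpos] at hm; nlinarith⟩
      set jr := Nat.find hex2 with hjrdef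
      have hjr : 1 ≤ r * 2^jr := Nat.find_spec hex2
      have hjrpos : 1 ≤ jr := by
        by_contra h
        push_neg at h
        interval_cases jr
        · simp at hjr; linarith
      have hjrup : r * 2^jr < 2 := by
        have hmin := Nat.find_min hex2 (show jr - 1 < jr by omega)
        push_neg at hmin
        have he : (2:ℝ)^jr = 2 * 2^(jr-1) := by
          rw [← pow_succ']
          congr 1
          omega
        rw [he]
        nlinarith
      have hjrn : jr ≤ n := by
        by_contra h
        push_neg at h
        have hle : (2:ℝ)^n ≤ 2^jr := pow_le_pow_right₀ one_le_two h.le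
        have : δ * 2^n ≤ r * 2^jr := by
          apply mul_le_mul hr hle (by positivity) hrpos.le
        linarith
      set b0 := ⌊(2:ℝ)^jr * (x 0 - r)⌋ with hb0
      set c0 := ⌊(2:ℝ)^jr * (x 0 + r)⌋ with hc0
      set b1 := ⌊(2:ℝ)^jr * (x 1 - r)⌋ with hb1
      set c1 := ⌊(2:ℝ)^jr * (x 1 + r)⌋ with hc1
      set Zf := (Finset.Icc b0 c0) ×ˢ (Finset.Icc b1 c1) with hZf
      have hmemZ : ∀ y ∈ Pf, y ∈ Metric.ball x r → cellIdx jr y ∈ Zf := by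
        intro y _ hyb
        have hd : dist y x < r := mem_ball.1 hyb
        have h0 := coord_le_dist y x 0
        have h1 := coord_le_dist y x 1
        have ha0 := abs_le.1 (le_of_lt (lt_of_le_of_lt h0 hd))
        have ha1 := abs_le.1 (le_of_lt (lt_of_le_of_lt h1 hd))
        simp only [hZf, Finset.mem_product, Finset.mem_Icc, cellIdx]
        have hp : (0:ℝ) < 2^jr := by positivity
        constructor <;> constructor
        · exact Int.floor_le_floor (by nlinarith [ha0.1])
        · exact Int.floor_le_floor (by nlinarith [ha0.2])
        · exact Int.floor_le_floor (by nlinarith [ha1.1])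
        · exact Int.floor_le_floor (by nlinarith [ha1.2])
      have hsubB : (↑Pf : Set (EuclideanSpace ℝ (Fin 2))) ∩ Metric.ball x r
          ⊆ ↑(Zf.biUnion (fun w => Pf.filter (fun y => cellIdx jr y = w))) := by
        rintro y ⟨hyPf, hyb⟩
        have hyPf' : y ∈ Pf := by exact_mod_cast hyPf
        have hZ := hmemZ y hyPf' hyb
        have hmf : y ∈ Pf.filter (fun y' => cellIdx jr y' = cellIdx jr y) :=
          Finset.mem_filter.2 ⟨hyPf', rfl⟩
        exact_mod_cast Finset.mem_biUnion.2 ⟨cellIdx jr y, hZ, hmf⟩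
      have hIcc5 : ∀ (u : ℝ) (b c : ℤ), b = ⌊(2:ℝ)^jr * (u - r)⌋ → c = ⌊(2:ℝ)^jr * (u + r)⌋ →
          ((Finset.Icc b c).card : ℝ) ≤ 5 := by
        intro u b c hb hc
        have hp : (0:ℝ) < 2^jr := by positivity
        have hcu : (c:ℝ) ≤ (2:ℝ)^jr * (u + r) := hc ▸ Int.floor_le _
        have hbu : (2:ℝ)^jr * (u - r) - 1 < (b:ℝ) := by
          rw [hb]
          have := Int.lt_floor_add_one ((2:ℝ)^jr * (u - r))
          linarith
        have hdiff : (c:ℝ) - b < 2^jr * (2*r) + 1 := by nlinarith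
        have h2r : (2:ℝ)^jr * (2*r) < 4 := by nlinarith
        have : (c:ℝ) - b < 5 := by linarith
        have hint : c - b < 5 := by exact_mod_cast this
        rw [Int.card_Icc]
        have h5 : (c + 1 - b).toNat ≤ 5 := by omega
        exact_mod_cast h5
      have hfin : ((↑Pf : Set (EuclideanSpace ℝ (Fin 2))) ∩ Metric.ball x r).ncard
          ≤ (Zf.biUnion (fun w => Pf.filter (fun y => cellIdx jr y = w))).card := by
        have := Set.ncard_le_ncard hsubB (Finset.finite_toSet _)
        rwa [Set.ncard_coe_finset] at this
      have hbig : ((Zf.biUnion (fun w => Pf.filter (fun y => cellIdx jr y = w))).card : ℝ)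
          ≤ (Zf.card : ℝ) * ((2:ℝ)^n/2^jr) := by
        have hb := Finset.card_biUnion_le (s := Zf)
          (t := fun w => Pf.filter (fun y => cellIdx jr y = w))
        calc ((Zf.biUnion (fun w => Pf.filter (fun y => cellIdx jr y = w))).card : ℝ)
            ≤ ∑ w ∈ Zf, ((Pf.filter (fun y => cellIdx jr y = w)).card : ℝ) := by
              exact_mod_cast hb
          _ ≤ ∑ w ∈ Zf, (2:ℝ)^n/2^jr :=
              Finset.sum_le_sum (fun w _ => HPf jr hjrpos hjrn w)
          _ = (Zf.card : ℝ) * ((2:ℝ)^n/2^jr) := by rw [Finset.sum_const, nsmul_eq_mul]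
      have hZ25 : (Zf.card : ℝ) ≤ 25 := by
        rw [hZf, Finset.card_product]
        push_cast
        have h5a := hIcc5 (x 0) b0 c0 hb0 hc0
        have h5b := hIcc5 (x 1) b1 c1 hb1 hc1
        nlinarith [Nat.cast_nonneg (α := ℝ) (Finset.Icc b0 c0).card,
          Nat.cast_nonneg (α := ℝ) (Finset.Icc b1 c1).card]
      have hfrac : (1:ℝ)/2^jr ≤ r := by
        rw [div_le_iff₀ (by positivity : (0:ℝ) < 2^jr)]
        linarith
      have hfinal : (Zf.card : ℝ) * ((2:ℝ)^n/2^jr) ≤ 100*(r/δ) := by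
        have hp : (0:ℝ) < 2^jr := by positivity
        have e1 : (2:ℝ)^n/2^jr = (2:ℝ)^n * (1/2^jr) := by ring
        calc (Zf.card : ℝ) * ((2:ℝ)^n/2^jr) ≤ 25 * ((2:ℝ)^n/2^jr) := by
              apply mul_le_mul_of_nonneg_right hZ25 (by positivity)
          _ ≤ 25 * ((4/δ) * r) := by
              rw [e1]
              apply mul_le_mul_of_nonneg_left ?_ (by norm_num)
              apply mul_le_mul h2n4 hfrac (by positivity) (by positivity)
          _ = 100*(r/δ) := by field_simp; ring
      calc ((↑Pf ∩ Metric.ball x r : Set (EuclideanSpace ℝ (Fin 2))).ncard : ℝ)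
          ≤ ((Zf.biUnion (fun w => Pf.filter (fun y => cellIdx jr y = w))).card : ℝ) := by
            exact_mod_cast hfin
        _ ≤ (Zf.card : ℝ) * ((2:ℝ)^n/2^jr) := hbig
        _ ≤ 100*(r/δ) := hfinal
end

section
/- Let F ⊆ [0,1]² be a self-similar set that is not contained in any line, and suppose the group generated by the orthogonal parts of its defining similarities is discrete (finite). Then F contains a self-similar set E which is the attractor of an IFS of three similarities of ℝ², all with the same contraction ratio, all with trivial orthogonal part (no rotation or reflection), and whose three fixed points are not collinear. -/
open Metric Set Matrix

noncomputable section
namespace Stmt9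

abbrev E2 := EuclideanSpace ℝ (Fin 2)

def cross (u v : E2) : ℝ := u 0 * v 1 - u 1 * v 0





theorem cross_smul_smul (a b : ℝ) (v : E2) : cross (a • v) (b • v) = 0 := by
  simp [cross, PiLp.smul_apply, smul_eq_mul]; ring

theorem not_collinear_of_cross (q : Fin 3 → E2)
    (h : cross (q 1 - q 0) (q 2 - q 0) ≠ 0) : ¬ Collinear ℝ (Set.range q) := by
  intro hcol
  rw [collinear_iff_of_mem (Set.mem_range_self 0)] at hcol
  obtain ⟨v, hv⟩ := hcol
  obtain ⟨r1, hr1⟩ := hv (q 1) (Set.mem_range_self 1)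
  obtain ⟨r2, hr2⟩ := hv (q 2) (Set.mem_range_self 2)
  apply h
  have e1 : q 1 - q 0 = r1 • v := by rw [hr1]; simp [vadd_eq_add]
  have e2 : q 2 - q 0 = r2 • v := by rw [hr2]; simp [vadd_eq_add]
  rw [e1, e2, cross_smul_smul]

theorem exists_triple_of_not_collinear (F : Set E2) (hne : F.Nonempty)
    (h : ¬ Collinear ℝ F) :
    ∃ x : Fin 3 → E2, (∀ j, x j ∈ F) ∧ cross (x 1 - x 0) (x 2 - x 0) ≠ 0 := by
  by_contra hcon
  push_neg at hcon
  apply h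
  obtain ⟨p, hp⟩ := hne
  by_cases hsub : ∀ q ∈ F, q = p
  · have : F ⊆ {p} := fun q hq => hsub q hq
    exact (collinear_singleton ℝ p).subset this
  · push_neg at hsub
    obtain ⟨a, ha, hap⟩ := hsub
    rw [collinear_iff_of_mem hp]
    refine ⟨a - p, fun q hq => ?_⟩
    have hc : cross (a - p) (q - p) = 0 := by
      have := hcon ![p, a, q] (by intro j; fin_cases j <;> simpa)
      simpa using this
    have hv : a - p ≠ 0 := sub_ne_zero.mpr hap
    have hv01 : (a - p) 0 ≠ 0 ∨ (a - p) 1 ≠ 0 := by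
      by_contra hcc
      push_neg at hcc
      apply hv
      ext i
      fin_cases i <;> simp [hcc.1, hcc.2]
    rw [cross] at hc
    simp only [PiLp.sub_apply] at hc
    rcases hv01 with h0 | h1
    · rw [PiLp.sub_apply] at h0
      refine ⟨(q 0 - p 0) / (a 0 - p 0), ?_⟩
      have : q - p = ((q 0 - p 0) / (a 0 - p 0)) • (a - p) := by
        ext i
        simp only [PiLp.smul_apply, PiLp.sub_apply, smul_eq_mul]
        fin_cases i
        all_goals simp only [Fin.zero_eta, Fin.mk_one]
        · field_simp
        · field_simp
          linear_combination hc
      rw [vadd_eq_add, ← this]; abel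
    · rw [PiLp.sub_apply] at h1
      refine ⟨(q 1 - p 1) / (a 1 - p 1), ?_⟩
      have : q - p = ((q 1 - p 1) / (a 1 - p 1)) • (a - p) := by
        ext i
        simp only [PiLp.smul_apply, PiLp.sub_apply, smul_eq_mul]
        fin_cases i
        all_goals simp only [Fin.zero_eta, Fin.mk_one]
        · field_simp
          linear_combination -hc
        · field_simp
      rw [vadd_eq_add, ← this]; abel


theorem exists_eps (x : Fin 3 → E2) (h : cross (x 1 - x 0) (x 2 - x 0) ≠ 0) :
    ∃ ε > 0, ∀ y : Fin 3 → E2, (∀ j, dist (y j) (x j) < ε) →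
      cross (y 1 - y 0) (y 2 - y 0) ≠ 0 := by
  have hg : Continuous fun y : Fin 3 → E2 => cross (y 1 - y 0) (y 2 - y 0) := by
    have hcoord : ∀ (j : Fin 3) (i : Fin 2), Continuous fun y : Fin 3 → E2 => y j i := by
      intro j i
      exact ((continuous_apply i).comp (PiLp.continuous_ofLp 2 _)).comp (continuous_apply j)
    simp only [cross, PiLp.sub_apply]
    exact (((hcoord 1 0).sub (hcoord 0 0)).mul ((hcoord 2 1).sub (hcoord 0 1))).sub
      (((hcoord 1 1).sub (hcoord 0 1)).mul ((hcoord 2 0).sub (hcoord 0 0)))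
  have := (hg.continuousAt (x := x)).eventually_ne h
  rw [Metric.eventually_nhds_iff] at this
  obtain ⟨ε, hε, hball⟩ := this
  refine ⟨ε, hε, fun y hy => hball ?_⟩
  rw [dist_pi_lt_iff hε]
  exact hy

theorem exists_word {G : Type*} [Group G] {ι : Type*} (A : ι → G)
    (hfin : ((Subgroup.closure (Set.range A) : Subgroup G) : Set G).Finite)
    {g : G} (hg : g ∈ Subgroup.closure (Set.range A)) :
    ∃ l : List ι, (l.map A).prod = g := by
  set M := Submonoid.closure (Set.range A) with hM
  have key : ∀ m ∈ M, m⁻¹ ∈ M := by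
    intro m hm
    have hmG : m ∈ Subgroup.closure (Set.range A) := by
      have : M ≤ (Subgroup.closure (Set.range A)).toSubmonoid :=
        Submonoid.closure_le.mpr (fun a ha => Subgroup.subset_closure ha)
      exact this hm
    have hpow : ∀ n : ℕ, m ^ n ∈ (Subgroup.closure (Set.range A) : Subgroup G) :=
      fun n => pow_mem hmG n
    have hninj : ¬ Function.Injective (fun n : ℕ => (⟨m ^ n, hpow n⟩ :
        (Subgroup.closure (Set.range A) : Subgroup G))) := by
      intro hinj
      have : Infinite (Subgroup.closure (Set.range A) : Subgroup G) :=
        Infinite.of_injective _ hinj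
      exact (Set.not_infinite.mpr hfin) (Set.infinite_coe_iff.mp this)
    rw [Function.not_injective_iff] at hninj
    obtain ⟨a, b, hab, hne⟩ := hninj
    have hab' : m ^ a = m ^ b := congrArg Subtype.val hab
    have hk : ∃ k, 1 ≤ k ∧ m ^ k = 1 := by
      rcases hne.lt_or_gt with hlt | hlt
      · refine ⟨b - a, by omega, ?_⟩
        have h2 : m ^ a * m ^ (b - a) = m ^ a * 1 := by
          rw [← pow_add, Nat.add_sub_cancel' hlt.le, mul_one, hab']
        exact mul_left_cancel h2
      · refine ⟨a - b, by omega, ?_⟩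
        have h2 : m ^ b * m ^ (a - b) = m ^ b * 1 := by
          rw [← pow_add, Nat.add_sub_cancel' hlt.le, mul_one, hab']
        exact mul_left_cancel h2
    obtain ⟨k, hk1, hkm⟩ := hk
    have : m ^ (k - 1) * m = 1 := by
      rw [← pow_succ, Nat.sub_add_cancel hk1]; exact hkm
    rw [inv_eq_of_mul_eq_one_left this]
    exact pow_mem hm _
  have hle : (Subgroup.closure (Set.range A) : Set G) ⊆ (M : Set G) := by
    intro y hy
    induction hy using Subgroup.closure_induction with
    | mem z hz => exact Submonoid.subset_closure hz
    | one => exact one_mem M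
    | mul a b _ _ ha hb => exact mul_mem ha hb
    | inv a _ ha => exact key a ha
  obtain ⟨l, hl, hprod⟩ := Submonoid.exists_list_of_mem_closure (hle hg)
  have main : ∀ l : List G, (∀ y ∈ l, y ∈ Set.range A) →
      ∃ l' : List ι, (l'.map A).prod = l.prod := by
    intro l
    induction l with
    | nil => exact fun _ => ⟨[], by simp⟩
    | cons a l ih =>
      intro hmem
      obtain ⟨i, hi⟩ := hmem a List.mem_cons_self
      obtain ⟨l', hl'⟩ := ih (fun y hy => hmem y (List.mem_cons_of_mem a hy))
      exact ⟨i :: l', by simp [hl', hi]⟩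
  obtain ⟨l', hl'⟩ := main l hl
  exact ⟨l', by rw [hl', hprod]⟩












variable {ι : Type*}

def compIFS (S : ι → E2 → E2) : List ι → E2 → E2
  | [], x => x
  | i :: w, x => S i (compIFS S w x)

theorem compIFS_append (S : ι → E2 → E2) (a b : List ι) (x : E2) :
    compIFS S (a ++ b) x = compIFS S a (compIFS S b x) := by
  induction a with
  | nil => rfl
  | cons i a ih => simp [compIFS, ih]

theorem orth_tr (U : Matrix.orthogonalGroup (Fin 2) ℝ) :
    (U : Matrix (Fin 2) (Fin 2) ℝ)ᵀ * U = 1 := by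
  have h := Matrix.mem_unitaryGroup_iff'.mp U.2
  rwa [Matrix.star_eq_conjTranspose, Matrix.conjTranspose_eq_transpose_of_trivial] at h

theorem norm_mulVec (U : Matrix.orthogonalGroup (Fin 2) ℝ) (x : E2) :
    ‖(show E2 from WithLp.toLp 2 ((U : Matrix (Fin 2) (Fin 2) ℝ).mulVec x))‖ = ‖x‖ := by
  have h1 : ∀ y : E2, ‖y‖ = Real.sqrt (dotProduct (WithLp.ofLp y) (WithLp.ofLp y)) := by
    intro y
    rw [EuclideanSpace.norm_eq]
    congr 1
    simp [dotProduct, sq]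
  rw [h1, h1]
  congr 1
  show dotProduct ((U : Matrix (Fin 2) (Fin 2) ℝ).mulVec x)
    ((U : Matrix (Fin 2) (Fin 2) ℝ).mulVec x) = _
  rw [Matrix.dotProduct_mulVec, ← Matrix.mulVec_transpose, Matrix.mulVec_mulVec, orth_tr,
    Matrix.one_mulVec]


section withS

variable (c : ι → ℝ) (A : ι → Matrix.orthogonalGroup (Fin 2) ℝ)
  (t : ι → E2) (S : ι → E2 → E2)
  (hS : ∀ i x, S i x
    = c i • (show E2 from WithLp.toLp 2 ((A i : Matrix (Fin 2) (Fin 2) ℝ).mulVec x)) + t i)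

include hS

theorem compIFS_eq (w : List ι) :
    ∃ d : E2, ∀ x : E2, compIFS S w x
      = ((w.map c).prod) •
          (show E2 from WithLp.toLp 2 ((((w.map A).prod : Matrix (Fin 2) (Fin 2) ℝ)).mulVec x)) + d := by
  induction w with
  | nil =>
    refine ⟨0, fun x => ?_⟩
    show x = (1:ℝ) • (show E2 from WithLp.toLp 2 (((((1 : Matrix.orthogonalGroup (Fin 2) ℝ))
      : Matrix (Fin 2) (Fin 2) ℝ)).mulVec x)) + 0
    rw [OneMemClass.coe_one, Matrix.one_mulVec, one_smul, add_zero, WithLp.toLp_ofLp]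
  | cons i w ih =>
    obtain ⟨d, hd⟩ := ih
    refine ⟨c i • (show E2 from WithLp.toLp 2 ((A i : Matrix (Fin 2) (Fin 2) ℝ).mulVec d)) + t i, fun x => ?_⟩
    show S i (compIFS S w x) = _
    rw [hd, hS]
    simp only [List.map_cons, List.prod_cons, WithLp.ofLp_add, WithLp.ofLp_smul, WithLp.ofLp_toLp,
      Matrix.mulVec_add, Matrix.mulVec_smul, WithLp.toLp_add, WithLp.toLp_smul, MulMemClass.coe_mul,
      ← Matrix.mulVec_mulVec, smul_add, smul_smul]
    abel

theorem compIFS_dist (hc : ∀ i, 0 < c i) (w : List ι) (x y : E2) :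
    dist (compIFS S w x) (compIFS S w y) = ((w.map c).prod) * dist x y := by
  obtain ⟨d, hd⟩ := compIFS_eq c A t S hS w
  rw [hd, hd, dist_eq_norm, dist_eq_norm]
  have : ((w.map c).prod) • (show E2 from WithLp.toLp 2 ((((w.map A).prod : Matrix (Fin 2) (Fin 2) ℝ)).mulVec x))
      + d - (((w.map c).prod) •
        (show E2 from WithLp.toLp 2 ((((w.map A).prod : Matrix (Fin 2) (Fin 2) ℝ)).mulVec y)) + d)
      = ((w.map c).prod) •
        (show E2 from WithLp.toLp 2 ((((w.map A).prod : Matrix (Fin 2) (Fin 2) ℝ)).mulVec (x - y))) := by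
    simp only [WithLp.ofLp_sub, Matrix.mulVec_sub, WithLp.toLp_sub, smul_sub]
    abel
  rw [this, norm_smul, norm_mulVec]
  congr 1
  rw [Real.norm_eq_abs, abs_of_nonneg]
  apply List.prod_nonneg
  intro a ha
  obtain ⟨i, _, rfl⟩ := List.mem_map.mp ha
  exact (hc i).le

end withS


-- main theorem to move
theorem main
    {ι : Type*} [Fintype ι] [Nonempty ι]
    (c : ι → ℝ) (hc : ∀ i, c i ∈ Set.Ioo (0 : ℝ) 1)
    (A : ι → Matrix.orthogonalGroup (Fin 2) ℝ)
    (t : ι → EuclideanSpace ℝ (Fin 2))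
    (S : ι → EuclideanSpace ℝ (Fin 2) → EuclideanSpace ℝ (Fin 2))
    (hS : ∀ i x, S i x
      = c i • (show EuclideanSpace ℝ (Fin 2) from WithLp.toLp 2 ((A i : Matrix (Fin 2) (Fin 2) ℝ).mulVec x))
        + t i)
    (F : Set (EuclideanSpace ℝ (Fin 2))) (hFne : F.Nonempty) (hFc : IsCompact F)
    (hFsub : ∀ x ∈ F, ∀ j, x j ∈ Set.Icc (0 : ℝ) 1)
    (hattr : F = ⋃ i, S i '' F)
    (hline : ¬ Collinear ℝ F)
    (hdiscrete : (((Subgroup.closure (Set.range A) :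
        Subgroup (Matrix.orthogonalGroup (Fin 2) ℝ)) :
        Set (Matrix.orthogonalGroup (Fin 2) ℝ))).Finite) :
    ∃ (E : Set (EuclideanSpace ℝ (Fin 2))) (c₀ : ℝ)
      (w : Fin 3 → EuclideanSpace ℝ (Fin 2)),
      E ⊆ F ∧ E.Nonempty ∧ IsCompact E ∧ c₀ ∈ Set.Ioo (0 : ℝ) 1 ∧
      E = ⋃ j : Fin 3, (fun x => c₀ • x + w j) '' E ∧
      ¬ Collinear ℝ (Set.range fun j : Fin 3 => (1 - c₀)⁻¹ • w j) := by
  classical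
  -- basic facts
  have hmapsF : ∀ i, ∀ x ∈ F, S i x ∈ F := by
    intro i x hx
    rw [hattr]
    exact Set.mem_iUnion_of_mem i (Set.mem_image_of_mem _ hx)
  have hcomp_maps : ∀ w : List ι, ∀ x ∈ F, compIFS S w x ∈ F := by
    intro w
    induction w with
    | nil => exact fun x hx => hx
    | cons i w ih => exact fun x hx => hmapsF i _ (ih x hx)
  -- non-collinear triple and epsilon
  obtain ⟨x, hxF, hxc⟩ := exists_triple_of_not_collinear F hFne hline
  obtain ⟨ε, hε, heps⟩ := exists_eps x hxc
  -- diameter bound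
  have hFd : ∀ a ∈ F, ∀ b ∈ F, dist a b ≤ 2 := by
    intro a ha b hb
    rw [EuclideanSpace.dist_eq]
    have h4 : ∑ i : Fin 2, dist (a i) (b i) ^ 2 ≤ 4 := by
      have hcoord : ∀ i : Fin 2, dist (a i) (b i) ^ 2 ≤ 1 := by
        intro i
        have h1 := hFsub a ha i
        have h2 := hFsub b hb i
        rw [Real.dist_eq]
        have : |a i - b i| ≤ 1 := by
          rw [abs_le]
          constructor <;> simp [Set.mem_Icc] at h1 h2 <;> nlinarith [h1.1, h1.2, h2.1, h2.2]
        nlinarith [abs_nonneg (a i - b i)]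
      calc ∑ i : Fin 2, dist (a i) (b i) ^ 2 ≤ ∑ _i : Fin 2, (1:ℝ) :=
            Finset.sum_le_sum (fun i _ => hcoord i)
        _ = 2 := by simp
        _ ≤ 4 := by norm_num
    calc Real.sqrt (∑ i : Fin 2, dist (a i) (b i) ^ 2) ≤ Real.sqrt 4 := Real.sqrt_le_sqrt h4
      _ = 2 := by
          rw [show (4:ℝ) = 2^2 by norm_num, Real.sqrt_sq (by norm_num)]
  -- max ratio
  set cmax : ℝ := Finset.univ.sup' Finset.univ_nonempty c with hcmax
  have hcm : ∀ i, c i ≤ cmax := fun i => Finset.le_sup' c (Finset.mem_univ i)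
  have hcm1 : cmax < 1 := by
    rw [hcmax, Finset.sup'_lt_iff]
    exact fun i _ => (hc i).2
  have hcm0 : 0 < cmax := by
    obtain ⟨i⟩ := ‹Nonempty ι›
    exact lt_of_lt_of_le (hc i).1 (hcm i)
  -- list product bounds
  have hprod_pos : ∀ w : List ι, 0 < ((w.map c).prod) := by
    intro w
    apply List.prod_pos
    intro a ha
    obtain ⟨i, _, rfl⟩ := List.mem_map.mp ha
    exact (hc i).1
  have hprod_le : ∀ w : List ι, ((w.map c).prod) ≤ cmax ^ w.length := by
    intro w
    induction w with
    | nil => simp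
    | cons i w ih =>
      simp only [List.map_cons, List.prod_cons, List.length_cons, pow_succ']
      exact mul_le_mul (hcm i) ih (hprod_pos w).le hcm0.le
  -- choose n
  obtain ⟨n, hn⟩ := exists_pow_lt_of_lt_one (by positivity : (0:ℝ) < ε / 2) hcm1
  have hstep : cmax ^ (n + 1) * 2 < ε := by
    have h1 : cmax ^ (n+1) ≤ cmax ^ n := pow_le_pow_of_le_one hcm0.le hcm1.le (by omega)
    nlinarith
  -- covering words
  have hcover : ∀ m : ℕ, ∀ y ∈ F, ∃ w : List ι, w.length = m ∧ y ∈ compIFS S w '' F := by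
    intro m
    induction m with
    | zero => exact fun y hy => ⟨[], rfl, y, hy, rfl⟩
    | succ m ih =>
      intro y hy
      have : y ∈ ⋃ i, S i '' F := hattr ▸ hy
      obtain ⟨i, z, hz, rfl⟩ := by simpa using this
      obtain ⟨w, hwlen, a, ha, haz⟩ := ih z hz
      exact ⟨i :: w, by simp [hwlen], a, ha, by simp [compIFS, haz]⟩
  -- membership of products in the subgroup
  have hmemG : ∀ w : List ι, ((w.map A).prod) ∈ Subgroup.closure (Set.range A) := by
    intro w
    apply list_prod_mem
    intro a ha
    obtain ⟨i, _, rfl⟩ := List.mem_map.mp ha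
    exact Subgroup.subset_closure (Set.mem_range_self i)
  -- construct words u j
  have hu : ∀ j : Fin 3, ∃ u : List ι, u ≠ [] ∧ ((u.map A).prod) = 1 ∧
      ∀ y ∈ F, dist (compIFS S u y) (x j) < ε := by
    intro j
    obtain ⟨w, hwlen, z, hz, hzx⟩ := hcover (n+1) (x j) (hxF j)
    obtain ⟨l, hl⟩ := exists_word A hdiscrete (inv_mem (hmemG w))
    refine ⟨w ++ l, ?_, ?_, ?_⟩
    · intro hnil
      have := congrArg List.length hnil
      simp [hwlen] at this
    · rw [List.map_append, List.prod_append, hl, mul_inv_cancel]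
    · intro y hy
      rw [compIFS_append]
      have hyl : compIFS S l y ∈ F := hcomp_maps l y hy
      calc dist (compIFS S w (compIFS S l y)) (x j)
          = dist (compIFS S w (compIFS S l y)) (compIFS S w z) := by rw [hzx]
        _ = ((w.map c).prod) * dist (compIFS S l y) z :=
            compIFS_dist c A t S hS (fun i => (hc i).1) w _ _
        _ ≤ cmax ^ (n+1) * 2 := by
            rw [← hwlen]
            exact mul_le_mul (hprod_le w) (hFd _ hyl _ hz) dist_nonneg
              (by positivity)
        _ < ε := hstep
  choose u hune hu1 hunear using hu
  -- the three permuted words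
  set rest : Fin 3 → List ι := ![u 1 ++ u 2, u 0 ++ u 2, u 0 ++ u 1] with hrest
  set v : Fin 3 → List ι := fun j => u j ++ rest j with hv
  set c₀ : ℝ := (((u 0).map c).prod) * (((u 1).map c).prod) * (((u 2).map c).prod) with hc₀def
  have hvprod : ∀ j, (((v j).map c).prod) = c₀ := by
    intro j
    fin_cases j <;>
      simp [hv, hrest, hc₀def, List.map_append, List.prod_append] <;> ring
  have hvA : ∀ j, (((v j).map A).prod) = 1 := by
    intro j
    fin_cases j <;>
      simp [hv, hrest, List.map_append, List.prod_append, hu1]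
  -- affine form of the three maps
  have hvj : ∀ j : Fin 3, ∃ d : E2, ∀ y : E2, compIFS S (v j) y = c₀ • y + d := by
    intro j
    obtain ⟨d, hd⟩ := compIFS_eq c A t S hS (v j)
    refine ⟨d, fun y => ?_⟩
    rw [hd, hvprod j, hvA j, OneMemClass.coe_one, Matrix.one_mulVec, WithLp.toLp_ofLp]
  choose W hW using hvj
  -- c₀ in (0,1)
  have hc₀pos : 0 < c₀ := by
    rw [hc₀def]
    have := hprod_pos (u 0)
    have := hprod_pos (u 1)
    have := hprod_pos (u 2)
    positivity
  have hrlt1 : ∀ j : Fin 3, (((u j).map c).prod) < 1 := by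
    intro j
    have hlen : 1 ≤ (u j).length := List.length_pos_iff.mpr (hune j)
    calc (((u j).map c).prod) ≤ cmax ^ (u j).length := hprod_le (u j)
      _ ≤ cmax ^ 1 := pow_le_pow_of_le_one hcm0.le hcm1.le hlen
      _ = cmax := pow_one cmax
      _ < 1 := hcm1
  have hc₀lt1 : c₀ < 1 := by
    rw [hc₀def]
    have h01 : (((u 0).map c).prod) * (((u 1).map c).prod) < 1 := by
      nlinarith [hprod_pos (u 0), hprod_pos (u 1), hrlt1 0, hrlt1 1]
    nlinarith [hprod_pos (u 2), hrlt1 2,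
      mul_pos (hprod_pos (u 0)) (hprod_pos (u 1)), h01]
  have hc₀ : c₀ ∈ Set.Ioo (0:ℝ) 1 := ⟨hc₀pos, hc₀lt1⟩
  -- fixed points
  set q : Fin 3 → E2 := fun j => (1 - c₀)⁻¹ • W j with hq
  have hfix : ∀ j, compIFS S (v j) (q j) = q j := by
    intro j
    rw [hW j, hq]
    have h1c : (1:ℝ) - c₀ ≠ 0 := by
      have := hc₀.2; intro h; nlinarith
    have key : c₀ * (1 - c₀)⁻¹ + 1 = (1 - c₀)⁻¹ := by
      field_simp
      ring
    calc c₀ • ((1 - c₀)⁻¹ • W j) + W j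
        = (c₀ * (1 - c₀)⁻¹) • W j + (1:ℝ) • W j := by rw [smul_smul, one_smul]
      _ = (c₀ * (1 - c₀)⁻¹ + 1) • W j := by rw [add_smul]
      _ = (1 - c₀)⁻¹ • W j := by rw [key]
  -- q j ∈ F
  have hdistv : ∀ j (a b : E2), dist (compIFS S (v j) a) (compIFS S (v j) b) = c₀ * dist a b := by
    intro j a b
    rw [compIFS_dist c A t S hS (fun i => (hc i).1), hvprod j]
  have hqF : ∀ j, q j ∈ F := by
    intro j
    obtain ⟨x₀, hx₀⟩ := hFne
    set g : E2 → E2 := compIFS S (v j) with hg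
    have hgF : ∀ y ∈ F, g y ∈ F := fun y hy => hcomp_maps (v j) y hy
    have hiterF : ∀ m : ℕ, g^[m] x₀ ∈ F := by
      intro m
      induction m with
      | zero => exact hx₀
      | succ m ih => rw [Function.iterate_succ_apply']; exact hgF _ ih
    have hiterd : ∀ m : ℕ, dist (g^[m] x₀) (q j) = c₀ ^ m * dist x₀ (q j) := by
      intro m
      induction m with
      | zero => simp
      | succ m ih =>
        rw [Function.iterate_succ_apply', show q j = g (q j) from (hfix j).symm]
        rw [hg, hdistv j, ← hg]
        rw [show g (q j) = q j from hfix j, ih, pow_succ]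
        ring
    have htend : Filter.Tendsto (fun m => g^[m] x₀) Filter.atTop (nhds (q j)) := by
      rw [tendsto_iff_dist_tendsto_zero]
      simp only [hiterd]
      have := (tendsto_pow_atTop_nhds_zero_of_lt_one hc₀pos.le hc₀lt1).mul_const
        (dist x₀ (q j))
      simpa using this
    exact hFc.isClosed.mem_of_tendsto htend (Filter.Eventually.of_forall hiterF)
  -- q j near x j
  have hqnear : ∀ j, dist (q j) (x j) < ε := by
    intro j
    have h1 : q j = compIFS S (u j) (compIFS S (rest j) (q j)) := by
      rw [← compIFS_append]
      exact (hfix j).symm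
    rw [h1]
    exact hunear j _ (hcomp_maps (rest j) _ (hqF j))
  -- the maps
  set f : Fin 3 → E2 → E2 := fun j y => c₀ • y + W j with hf
  have hfv : ∀ j (y : E2), f j y = compIFS S (v j) y := by
    intro j y
    rw [hf, hW j]
  have hfF : ∀ j, ∀ y ∈ F, f j y ∈ F := by
    intro j y hy
    rw [hfv]
    exact hcomp_maps (v j) y hy
  have hfcont : ∀ j, Continuous (f j) := by
    intro j
    exact ((continuous_const (y := c₀)).smul (continuous_id : Continuous (id : E2 → E2))).add continuous_const
  have hfinj : ∀ j (a b : E2), f j a = f j b → a = b := by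
    intro j a b hab
    simp only [hf] at hab
    have h1 : c₀ • a = c₀ • b := by
      have := congrArg (fun z => z - W j) hab
      simpa using this
    exact smul_right_injective E2 (ne_of_gt hc₀pos) h1
  have hfq : ∀ j, f j (q j) = q j := by
    intro j
    rw [hfv]; exact hfix j
  -- the iterated sets
  set T : Set E2 → Set E2 := fun s => ⋃ j : Fin 3, f j '' s with hT
  have hTmono : ∀ s s' : Set E2, s ⊆ s' → T s ⊆ T s' :=
    fun s s' h => Set.iUnion_mono (fun j => Set.image_mono h)
  set K : ℕ → Set E2 := fun m => T^[m] F with hK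
  have hKsucc : ∀ m, K (m+1) = T (K m) := by
    intro m
    rw [hK]
    exact Function.iterate_succ_apply' T m F
  have hTF : T F ⊆ F := by
    rw [hT]
    exact Set.iUnion_subset (fun j => Set.image_subset_iff.mpr (fun y hy => hfF j y hy))
  have hKF : ∀ m, K m ⊆ F := by
    intro m
    induction m with
    | zero => exact subset_rfl
    | succ m ih => rw [hKsucc]; exact (hTmono _ _ ih).trans hTF
  have hKdec : ∀ m, K (m+1) ⊆ K m := by
    intro m
    induction m with
    | zero => rw [hKsucc]; exact hTF
    | succ m ih =>
      rw [hKsucc (m+1), hKsucc m]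
      exact hTmono _ _ (by rw [← hKsucc m]; exact ih)
  have hKanti : ∀ a b, a ≤ b → K b ⊆ K a := fun a b h => antitone_nat_of_succ_le hKdec h
  have hKcpt : ∀ m, IsCompact (K m) := by
    intro m
    induction m with
    | zero => exact hFc
    | succ m ih =>
      rw [hKsucc]
      exact isCompact_iUnion (fun j => ih.image (hfcont j))
  have hKq : ∀ m, q 0 ∈ K m := by
    intro m
    induction m with
    | zero => exact hqF 0
    | succ m ih =>
      rw [hKsucc]
      exact Set.mem_iUnion_of_mem 0 ⟨q 0, ih, hfq 0⟩
  set E : Set E2 := ⋂ m, K m with hE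
  have hEF : E ⊆ F := (Set.iInter_subset K 0).trans (hKF 0)
  have hEcpt : IsCompact E :=
    (hKcpt 0).of_isClosed_subset (isClosed_iInter (fun m => (hKcpt m).isClosed))
      (Set.iInter_subset K 0)
  have hEne : E.Nonempty :=
    IsCompact.nonempty_iInter_of_sequence_nonempty_isCompact_isClosed K hKdec
      (fun m => ⟨q 0, hKq m⟩) (hKcpt 0) (fun m => (hKcpt m).isClosed)
  have hEeq : E = ⋃ j : Fin 3, f j '' E := by
    apply Set.Subset.antisymm
    · intro z hz
      have hmem : ∀ m, z ∈ T (K m) := by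
        intro m
        rw [← hKsucc]
        exact Set.mem_iInter.mp hz (m+1)
      have hchoice : ∀ m : ℕ, ∃ (j : Fin 3) (y : E2), y ∈ K m ∧ f j y = z := by
        intro m
        obtain ⟨j, y, hy, hyz⟩ := by simpa [hT] using hmem m
        exact ⟨j, y, hy, hyz⟩
      choose jm ym hym hymz using hchoice
      obtain ⟨j₀, hj₀⟩ := Finite.exists_infinite_fiber jm
      have hinf : {m | jm m = j₀}.Infinite := by
        rw [← Set.infinite_coe_iff] at *
        exact hj₀
      obtain ⟨m₁, hm₁⟩ := hinf.nonempty
      have hyy : ∀ m₂ ∈ {m | jm m = j₀}, ym m₂ = ym m₁ := by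
        intro m₂ hm₂
        apply hfinj j₀
        have e1 : f j₀ (ym m₂) = z := by rw [← hm₂]; exact hymz m₂
        have e2 : f j₀ (ym m₁) = z := by rw [← hm₁]; exact hymz m₁
        rw [e1, e2]
      have hyE : ym m₁ ∈ E := by
        rw [hE, Set.mem_iInter]
        intro m
        have : ∃ m₂ ∈ {m | jm m = j₀}, m ≤ m₂ := by
          by_contra hcc
          push_neg at hcc
          apply hinf
          apply Set.Finite.subset (Set.finite_Iio m)
          intro a ha
          exact hcc a ha
        obtain ⟨m₂, hm₂, hm₂le⟩ := this
        rw [← hyy m₂ hm₂]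
        exact hKanti m m₂ hm₂le (hym m₂)
      refine Set.mem_iUnion_of_mem j₀ ⟨ym m₁, hyE, ?_⟩
      rw [← hm₁]
      exact hymz m₁
    · intro z hz
      obtain ⟨j, y, hy, hyz⟩ := by simpa using hz
      rw [hE, Set.mem_iInter]
      intro m
      cases m with
      | zero => exact hKF 0 (hyz ▸ hfF j y (hEF hy))
      | succ m =>
        rw [hKsucc]
        exact Set.mem_iUnion_of_mem j ⟨y, Set.mem_iInter.mp hy m, hyz⟩
  refine ⟨E, c₀, W, hEF, hEne, hEcpt, hc₀, hEeq, ?_⟩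
  exact not_collinear_of_cross q (heps q (fun j => hqnear j))




end Stmt9

/-- A planar self-similar set not contained in a line, with discrete (finite) group
generated by the orthogonal parts, contains a self-similar set `E` generated by three
homotheties with a common ratio, trivial orthogonal parts, and non-collinear fixed points. -/
theorem stmt_9
    {ι : Type*} [Fintype ι] [Nonempty ι]
    (c : ι → ℝ) (hc : ∀ i, c i ∈ Set.Ioo (0 : ℝ) 1)
    (A : ι → Matrix.orthogonalGroup (Fin 2) ℝ)
    (t : ι → EuclideanSpace ℝ (Fin 2))
    (S : ι → EuclideanSpace ℝ (Fin 2) → EuclideanSpace ℝ (Fin 2))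
    (hS : ∀ i x, S i x
      = c i • (show EuclideanSpace ℝ (Fin 2) from WithLp.toLp 2 ((A i : Matrix (Fin 2) (Fin 2) ℝ).mulVec x))
        + t i)
    (F : Set (EuclideanSpace ℝ (Fin 2))) (hFne : F.Nonempty) (hFc : IsCompact F)
    (hFsub : ∀ x ∈ F, ∀ j, x j ∈ Set.Icc (0 : ℝ) 1)
    (hattr : F = ⋃ i, S i '' F)
    (hline : ¬ Collinear ℝ F)
    (hdiscrete : (((Subgroup.closure (Set.range A) :
        Subgroup (Matrix.orthogonalGroup (Fin 2) ℝ)) :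
        Set (Matrix.orthogonalGroup (Fin 2) ℝ))).Finite) :
    ∃ (E : Set (EuclideanSpace ℝ (Fin 2))) (c₀ : ℝ)
      (w : Fin 3 → EuclideanSpace ℝ (Fin 2)),
      E ⊆ F ∧ E.Nonempty ∧ IsCompact E ∧ c₀ ∈ Set.Ioo (0 : ℝ) 1 ∧
      E = ⋃ j : Fin 3, (fun x => c₀ • x + w j) '' E ∧
      ¬ Collinear ℝ (Set.range fun j : Fin 3 => (1 - c₀)⁻¹ • w j) := by
  exact Stmt9.main c hc A t S hS F hFne hFc hFsub hattr hline hdiscrete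
end
end
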